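/- arXiv:1304.0852 — 4 statements merged into one kernel-verified Lean document; each statement's English description precedes it below -/
import Mathlib

section
/- For every g ∈ G = Sp(V), the number of vectors v ∈ V with g v = v equals the number of cosets ω ∈ Ω⁺ with g·ω = ω plus the number of cosets ω ∈ Ω⁻ with g·ω = ω. (Equivalently, the permutation character of G on V equals the sum of the permutation characters of G on Ω⁺ and on Ω⁻.) -/
set_option synthInstance.maxHeartbeats 1000000
set_option maxHeartbeats 1000000

open scoped BigOperators

/-- The field with `2^f` elements (`q = 2^f`). -/
abbrev Fq (f : ℕ) : Type := GaloisField 2 f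

/-- The natural `2m`-dimensional symplectic space over `Fq f`. -/
abbrev V (f m : ℕ) : Type := (Fin m → Fq f) × (Fin m → Fq f)

/-- The standard nondegenerate alternating bilinear form
`B((x,y),(x',y')) = ∑ i, (x i * y' i + y i * x' i)`. -/
noncomputable def B {f m : ℕ} (u w : V f m) : Fq f :=
  ∑ i, (u.1 i * w.2 i + u.2 i * w.1 i)

/-- The symplectic group `Sp_{2m}(2^f)`: the invertible linear maps preserving `B`. -/
def Sp (f m : ℕ) : Subgroup ((V f m →ₗ[Fq f] V f m)ˣ) where
  carrier := {g | ∀ u w : V f m,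
    B ((g : V f m →ₗ[Fq f] V f m) u) ((g : V f m →ₗ[Fq f] V f m) w) = B u w}
  one_mem' := by intro u w; simp
  mul_mem' := by
    intro g h hg hh u w
    simp only [Units.val_mul, Module.End.mul_apply]
    rw [hg, hh]
  inv_mem' := by
    intro g hg u w
    have := hg (((g⁻¹ : _ˣ) : V f m →ₗ[Fq f] V f m) u)
      (((g⁻¹ : _ˣ) : V f m →ₗ[Fq f] V f m) w)
    simpa [← Module.End.mul_apply, ← Units.val_mul] using this.symm

/-- The natural action of the symplectic group on `V` by matrix multiplication. -/
noncomputable instance {f m : ℕ} : MulAction (Sp f m) (V f m) where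
  smul g v := ((g : (V f m →ₗ[Fq f] V f m)ˣ) : V f m →ₗ[Fq f] V f m) v
  one_smul v := by simp [HSMul.hSMul, SMul.smul]
  mul_smul g h v := by simp [HSMul.hSMul, SMul.smul, Units.val_mul]

/-- The quadratic form of plus type: `Q⁺(x,y) = ∑ i, x i * y i`. -/
noncomputable def Qplus {f m : ℕ} (v : V f m) : Fq f := ∑ i, v.1 i * v.2 i

/-- The quadratic form of minus type:
`Q⁻(x,y) = x 0 ^ 2 + a * y 0 ^ 2 + ∑ i, x i * y i`. -/
noncomputable def Qminus {f m : ℕ} (hm : 0 < m) (a : Fq f) (v : V f m) : Fq f :=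
  v.1 ⟨0, hm⟩ ^ 2 + a * v.2 ⟨0, hm⟩ ^ 2 + ∑ i, v.1 i * v.2 i

/-- The isometry group of a quadratic form `Q` on `V`, as a subgroup of `Sp`. -/
def Ogrp {f m : ℕ} (Q : V f m → Fq f) : Subgroup (Sp f m) where
  carrier := {g | ∀ v : V f m, Q (g • v) = Q v}
  one_mem' := by intro v; rw [one_smul]
  mul_mem' := by intro g h hg hh v; rw [mul_smul, hg, hh]
  inv_mem' := by
    intro g hg v
    conv_rhs => rw [← smul_inv_smul g v]
    rw [hg]

/-- The orthogonal group `O⁺ = O⁺_{2m}(2^f)` of the plus-type form, inside `Sp`. -/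
noncomputable def Oplus (f m : ℕ) : Subgroup (Sp f m) := Ogrp Qplus

/-- The orthogonal group `O⁻ = O⁻_{2m}(2^f)` of the minus-type form, inside `Sp`. -/
noncomputable def Ominus (f m : ℕ) (hm : 0 < m) (a : Fq f) : Subgroup (Sp f m) :=
  Ogrp (Qminus hm a)


namespace SpAux
variable {f m : ℕ}

lemma Fq_add_self (x : Fq f) : x + x = 0 := CharTwo.add_self_eq_zero x
lemma Fq_add_sq (x y : Fq f) : (x + y)^2 = x^2 + y^2 := CharTwo.add_sq x y

noncomputable def sqt (x : Fq f) : Fq f := (frobeniusEquiv (Fq f) 2).symm x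
lemma sqt_sq (x : Fq f) : sqt x ^ 2 = x := by
  have := frobeniusEquiv_symm_pow_p (Fq f) 2 x
  simpa [sqt, pow_two] using this
lemma sq_inj {x y : Fq f} (h : x^2 = y^2) : x = y := by
  have h2 : (x + y)^2 = 0 := by rw [Fq_add_sq, h, Fq_add_self]
  have := pow_eq_zero_iff (n := 2) (by norm_num) |>.mp h2
  have := CharTwo.neg_eq y ▸ (eq_neg_of_add_eq_zero_left this)
  simpa using this

lemma V_add_self (v : V f m) : v + v = 0 := by
  have h : v + v = ((1 : Fq f) + 1) • v := by rw [add_smul, one_smul]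
  rw [h, Fq_add_self (1 : Fq f), zero_smul]

lemma B_add_left (u v w : V f m) : B (u+v) w = B u w + B v w := by
  unfold B; rw [← Finset.sum_add_distrib]
  refine Finset.sum_congr rfl fun i _ => ?_
  simp only [Prod.fst_add, Prod.snd_add, Pi.add_apply]; ring
lemma B_add_right (u v w : V f m) : B u (v+w) = B u v + B u w := by
  unfold B; rw [← Finset.sum_add_distrib]
  refine Finset.sum_congr rfl fun i _ => ?_
  simp only [Prod.fst_add, Prod.snd_add, Pi.add_apply]; ring
lemma B_smul_left (c : Fq f) (u w : V f m) : B (c • u) w = c * B u w := by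
  unfold B; rw [Finset.mul_sum]
  refine Finset.sum_congr rfl fun i _ => ?_
  simp only [Prod.smul_fst, Prod.smul_snd, Pi.smul_apply, smul_eq_mul]; ring
lemma B_smul_right (c : Fq f) (u w : V f m) : B u (c • w) = c * B u w := by
  unfold B; rw [Finset.mul_sum]
  refine Finset.sum_congr rfl fun i _ => ?_
  simp only [Prod.smul_fst, Prod.smul_snd, Pi.smul_apply, smul_eq_mul]; ring
lemma B_symm (u w : V f m) : B u w = B w u := by
  refine Finset.sum_congr rfl fun i _ => ?_; ring
lemma B_self (u : V f m) : B u u = 0 := by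
  unfold B
  refine Finset.sum_eq_zero fun i _ => ?_
  rw [mul_comm]; exact Fq_add_self _
lemma B_zero_left (u : V f m) : B 0 u = 0 := by
  unfold B
  refine Finset.sum_eq_zero fun i _ => ?_
  simp

noncomputable def evec (i : Fin m) : V f m := (Pi.single i 1, 0)
noncomputable def fvec (i : Fin m) : V f m := (0, Pi.single i 1)

lemma B_evec (u : V f m) (i : Fin m) : B u (evec i) = u.2 i := by
  unfold B evec
  simp [Pi.single_apply, mul_ite]
lemma B_fvec (u : V f m) (i : Fin m) : B u (fvec i) = u.1 i := by
  unfold B fvec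
  simp [Pi.single_apply, mul_ite]

lemma B_right_cancel {u v : V f m} (h : ∀ w, B u w = B v w) : u = v := by
  have h1 : u.1 = v.1 := funext fun i => by rw [← B_fvec u i, ← B_fvec v i, h]
  have h2 : u.2 = v.2 := funext fun i => by rw [← B_evec u i, ← B_evec v i, h]
  exact Prod.ext h1 h2

lemma smul_single (c : Fq f) (i : Fin m) : c • (Pi.single i (1 : Fq f) : Fin m → Fq f) = Pi.single i c := by
  funext j; simp [Pi.single_apply, mul_ite]

lemma vec_decomp (u : V f m) : ∑ i, (u.1 i • evec i + u.2 i • fvec i) = u := by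
  have h1 : ((∑ i, (u.1 i • evec i + u.2 i • fvec i) : V f m)).1 = u.1 := by
    rw [Prod.fst_sum]
    simp only [Prod.fst_add, Prod.smul_fst, evec, fvec, smul_zero, add_zero]
    simp only [smul_single]
    exact Finset.univ_sum_single u.1
  have h2 : ((∑ i, (u.1 i • evec i + u.2 i • fvec i) : V f m)).2 = u.2 := by
    rw [Prod.snd_sum]
    simp only [Prod.snd_add, Prod.smul_snd, evec, fvec, smul_zero, zero_add]
    simp only [smul_single]
    exact Finset.univ_sum_single u.2
  exact Prod.ext h1 h2

end SpAux


namespace SpAux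
variable {f m : ℕ}

lemma smul_def (g : Sp f m) (v : V f m) :
    g • v = ((g : (V f m →ₗ[Fq f] V f m)ˣ) : V f m →ₗ[Fq f] V f m) v := rfl

lemma sp_smul_add (g : Sp f m) (u v : V f m) : g • (u + v) = g • u + g • v := by
  rw [smul_def, smul_def, smul_def]; exact map_add _ u v

lemma sp_smul_smul (g : Sp f m) (c : Fq f) (v : V f m) : g • (c • v) = c • (g • v) := by
  rw [smul_def, smul_def]; exact map_smul _ c v

lemma B_sp (g : Sp f m) (u v : V f m) : B (g • u) (g • v) = B u v := g.2 u v

lemma B_sp_inv_left (h : Sp f m) (x u : V f m) : B (h⁻¹ • x) u = B x (h • u) := by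
  conv_rhs => rw [← smul_inv_smul h x]
  rw [B_sp]

/-- `Qplus` of a sum. -/
lemma Qplus_add (u v : V f m) : Qplus (u + v) = Qplus u + Qplus v + B u v := by
  unfold Qplus B
  rw [← Finset.sum_add_distrib, ← Finset.sum_add_distrib]
  refine Finset.sum_congr rfl fun i _ => ?_
  simp only [Prod.fst_add, Prod.snd_add, Pi.add_apply]; ring

lemma Qplus_smul (c : Fq f) (u : V f m) : Qplus (c • u) = c^2 * Qplus u := by
  unfold Qplus
  rw [Finset.mul_sum]
  refine Finset.sum_congr rfl fun i _ => ?_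
  simp only [Prod.smul_fst, Prod.smul_snd, Pi.smul_apply, smul_eq_mul]; ring

lemma Qplus_zero : Qplus (0 : V f m) = 0 := by
  unfold Qplus; exact Finset.sum_eq_zero fun i _ => by simp

/-- The linear functional whose square is `Qplus (g • u) + Qplus u`. -/
noncomputable def ccL (g : Sp f m) (u : V f m) : Fq f := sqt (Qplus (g • u) + Qplus u)

lemma ccL_sq (g : Sp f m) (u : V f m) : ccL g u ^ 2 = Qplus (g • u) + Qplus u := sqt_sq _

lemma ccL_add (g : Sp f m) (u v : V f m) : ccL g (u + v) = ccL g u + ccL g v := by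
  apply sq_inj
  rw [Fq_add_sq, ccL_sq, ccL_sq, ccL_sq, sp_smul_add, Qplus_add, Qplus_add u v]
  rw [B_sp]
  linear_combination Fq_add_self (B u v)

lemma ccL_smul (g : Sp f m) (c : Fq f) (u : V f m) : ccL g (c • u) = c * ccL g u := by
  apply sq_inj
  rw [mul_pow, ccL_sq, ccL_sq, sp_smul_smul, Qplus_smul, Qplus_smul]
  ring

noncomputable def ccLm (g : Sp f m) : V f m →ₗ[Fq f] Fq f where
  toFun := ccL g
  map_add' := ccL_add g
  map_smul' := ccL_smul g

/-- The "cocycle" vector attached to `g`. -/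
noncomputable def cc (g : Sp f m) : V f m := (fun i => ccL g (fvec i), fun i => ccL g (evec i))

lemma B_cc (g : Sp f m) (u : V f m) : B (cc g) u = ccL g u := by
  have hd : u = ∑ i, (u.1 i • evec i + u.2 i • fvec i) := (vec_decomp u).symm
  have h2 : ccL g u = ∑ i, (u.1 i * ccL g (evec i) + u.2 i * ccL g (fvec i)) := by
    conv_lhs => rw [hd]
    show ccLm g _ = _
    rw [map_sum]
    refine Finset.sum_congr rfl fun i _ => ?_
    simp only [map_add, map_smul, smul_eq_mul]
    rfl
  rw [h2]
  unfold B cc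
  refine Finset.sum_congr rfl fun i _ => ?_
  ring

lemma cc_spec (g : Sp f m) (u : V f m) : Qplus (g • u) = Qplus u + B (cc g) u ^ 2 := by
  rw [B_cc, ccL_sq]
  linear_combination (-1 : Fq f) * Fq_add_self (Qplus u)

lemma cc_unique {g : Sp f m} {c : V f m}
    (h : ∀ u, Qplus (g • u) = Qplus u + B c u ^ 2) : c = cc g := by
  apply B_right_cancel
  intro w
  apply sq_inj
  have h1 := h w
  have h2 := cc_spec g w
  linear_combination h2 - h1

lemma cc_one : cc (1 : Sp f m) = 0 := by
  symm
  apply cc_unique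
  intro u
  rw [one_smul, B_zero_left]
  ring

lemma cc_mul (g h : Sp f m) : cc (g * h) = cc h + h⁻¹ • cc g := by
  symm
  apply cc_unique
  intro u
  rw [mul_smul, cc_spec g (h • u), cc_spec h u, B_add_left, Fq_add_sq, B_sp_inv_left]
  ring

lemma V_eq_of_add_eq_zero {x y : V f m} (h : x + y = 0) : x = y := by
  have := eq_neg_of_add_eq_zero_left h
  rw [this]
  have h1 : (-1 : Fq f) • y = -y := by rw [neg_one_smul]
  rw [← h1, show (-1 : Fq f) = 1 from CharTwo.neg_eq 1, one_smul]

lemma cc_inv (g : Sp f m) : cc g⁻¹ = g • cc g := by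
  have h := cc_mul g g⁻¹
  rw [mul_inv_cancel, cc_one, inv_inv] at h
  exact V_eq_of_add_eq_zero h.symm

end SpAux

namespace SpAux
variable {f m : ℕ}

/-- The affine action of `Sp` on `V` corresponding to its action on quadratic forms. -/
noncomputable def astar (g : Sp f m) (v : V f m) : V f m := g • v + cc g⁻¹

lemma astar_one (v : V f m) : astar (1 : Sp f m) v = v := by
  rw [astar, inv_one, cc_one, one_smul, add_zero]

lemma astar_mul (g h : Sp f m) (v : V f m) : astar (g * h) v = astar g (astar h v) := by
  unfold astar
  rw [mul_inv_rev, cc_mul h⁻¹ g⁻¹, inv_inv, mul_smul, sp_smul_add]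
  abel

lemma astar_inv_astar (g : Sp f m) (v : V f m) : astar g⁻¹ (astar g v) = v := by
  rw [← astar_mul, inv_mul_cancel, astar_one]

lemma astar_astar_inv (g : Sp f m) (v : V f m) : astar g (astar g⁻¹ v) = v := by
  rw [← astar_mul, mul_inv_cancel, astar_one]

/-- The quadratic form with polar form `B` parametrized by `w`. -/
noncomputable def Qw (w u : V f m) : Fq f := Qplus u + B w u ^ 2

lemma Qw_comp (w : V f m) (g : Sp f m) (u : V f m) : Qw w (g • u) = Qw (astar g⁻¹ w) u := by
  unfold Qw astar
  rw [cc_spec g u, inv_inv]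
  have hB : B w (g • u) = B (g⁻¹ • w) u := (B_sp_inv_left g w u).symm
  rw [hB, B_add_left, Fq_add_sq]
  ring

lemma Qw_point_inj {w w' : V f m} (h : ∀ u, Qw w u = Qw w' u) : w = w' := by
  apply B_right_cancel
  intro u
  apply sq_inj
  have := h u
  unfold Qw at this
  linear_combination this

lemma mem_Ogrp_iff {Q : V f m → Fq f} {g : Sp f m} : g ∈ Ogrp Q ↔ ∀ v, Q (g • v) = Q v :=
  Iff.rfl

lemma mem_Ogrp_Qw {w : V f m} {g : Sp f m} : g ∈ Ogrp (Qw w) ↔ astar g w = w := by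
  rw [mem_Ogrp_iff]
  constructor
  · intro h
    have h1 : astar g⁻¹ w = w := Qw_point_inj fun u => by rw [← Qw_comp, h]
    conv_lhs => rw [← h1]
    exact astar_astar_inv g w
  · intro h v
    have h1 : astar g⁻¹ w = w := by
      conv_lhs => rw [← h]
      exact astar_inv_astar g w
    rw [Qw_comp, h1]

end SpAux

namespace SpAux
variable {f m : ℕ}

/-- The transvection `x ↦ x + (l * B u x) • u` as a linear map. -/
noncomputable def tmap (u : V f m) (l : Fq f) : V f m →ₗ[Fq f] V f m where
  toFun x := x + (l * B u x) • u
  map_add' x y := by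
    show (x + y) + (l * B u (x + y)) • u = (x + (l * B u x) • u) + (y + (l * B u y) • u)
    rw [B_add_right, mul_add, add_smul]
    abel
  map_smul' c x := by
    show (c • x) + (l * B u (c • x)) • u = (RingHom.id (Fq f)) c • (x + (l * B u x) • u)
    rw [B_smul_right]
    simp only [RingHom.id_apply, smul_add, smul_smul]
    ring_nf

lemma tmap_apply (u : V f m) (l : Fq f) (x : V f m) : tmap u l x = x + (l * B u x) • u := rfl

lemma tmap_tmap (u : V f m) (l : Fq f) (x : V f m) : tmap u l (tmap u l x) = x := by
  rw [tmap_apply, tmap_apply]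
  rw [B_add_right, B_smul_right, B_self, mul_zero, add_zero]
  rw [add_assoc, ← add_smul]
  rw [Fq_add_self, zero_smul, add_zero]

/-- The transvection as a unit of the endomorphism ring. -/
noncomputable def tunit (u : V f m) (l : Fq f) : (V f m →ₗ[Fq f] V f m)ˣ where
  val := tmap u l
  inv := tmap u l
  val_inv := LinearMap.ext fun x => tmap_tmap u l x
  inv_val := LinearMap.ext fun x => tmap_tmap u l x

lemma tunit_mem (u : V f m) (l : Fq f) : tunit u l ∈ Sp f m := by
  intro x y
  show B (tmap u l x) (tmap u l y) = B x y
  rw [tmap_apply, tmap_apply, B_add_left, B_add_right, B_add_right, B_smul_left,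
    B_smul_left, B_smul_right, B_smul_right, B_self, B_symm x u]
  ring_nf
  linear_combination (l * B u x * B u y) * Fq_add_self (1 : Fq f)

/-- The transvection as an element of `Sp`. -/
noncomputable def tsp (u : V f m) (l : Fq f) : Sp f m := ⟨tunit u l, tunit_mem u l⟩

lemma tsp_smul (u : V f m) (l : Fq f) (x : V f m) : tsp u l • x = x + (l * B u x) • u := rfl

lemma tsp_inv (u : V f m) (l : Fq f) : (tsp u l)⁻¹ = tsp u l :=
  Subtype.ext (Units.ext rfl)

lemma cc_tsp (u : V f m) (l : Fq f) :
    cc (tsp u l) = sqt (l^2 * Qplus u + l) • u := by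
  symm
  apply cc_unique
  intro x
  rw [tsp_smul, Qplus_add, Qplus_smul, B_smul_right, B_smul_left,
    mul_pow (sqt (l^2 * Qplus u + l)) (B u x), sqt_sq, B_symm x u]
  ring

/-- Single-transvection reachability. -/
lemma reach (w u : V f m) (H : ∃ α : Fq f, Qplus (w + u) + Qplus w = α^2 + α) :
    ∃ t : Sp f m, astar t w = w + u := by
  obtain ⟨α, hα⟩ := H
  have hQ : Qplus u + B w u = α^2 + α := by
    rw [Qplus_add] at hα
    linear_combination hα - Fq_add_self (Qplus w)
  set β := B u w with hβ
  set K := Qplus u + β^2 with hK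
  set γ := α + β with hγ
  have hγK : γ^2 + γ = K := by
    rw [hγ, Fq_add_sq, hK, hβ, B_symm u w]
    linear_combination - hQ + Fq_add_self (B w u)
  have hl : ∃ l : Fq f, l^2 * K + l = 1 := by
    by_cases hK0 : K = 0
    · exact ⟨1, by rw [hK0]; ring⟩
    · refine ⟨γ / K, ?_⟩
      have h1 : (γ / K)^2 * K + γ / K = (γ^2 + γ) / K := by
        field_simp
      rw [h1, hγK, div_self hK0]
  obtain ⟨l, hl⟩ := hl
  refine ⟨tsp u l, ?_⟩
  have hccinv : cc (tsp u l)⁻¹ = sqt (l^2 * Qplus u + l) • u := by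
    rw [tsp_inv, cc_tsp]
  have hν : sqt (l^2 * Qplus u + l) = 1 + l * β := by
    apply sq_inj
    rw [sqt_sq, Fq_add_sq, mul_pow]
    have hQu : Qplus u = K + β^2 := by
      rw [hK]
      linear_combination - Fq_add_self (β^2)
    rw [hQu]
    linear_combination hl
  rw [astar, tsp_smul, hccinv, hν, hβ]
  rw [add_assoc, ← add_smul]
  have hsc : l * B u w + (1 + l * B u w) = 1 := by
    linear_combination Fq_add_self (l * B u w)
  rw [hsc, one_smul]
end SpAux

namespace SpAux
variable {f m : ℕ}

/-- The Artin–Schreier predicate: `x = α² + α` for some `α`. -/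
def ASp (x : Fq f) : Prop := ∃ α : Fq f, x = α^2 + α

lemma ASp_zero : ASp (0 : Fq f) := ⟨0, by ring⟩

lemma ASp_add {x y : Fq f} (hx : ASp x) (hy : ASp y) : ASp (x + y) := by
  obtain ⟨α, hα⟩ := hx
  obtain ⟨β, hβ⟩ := hy
  exact ⟨α + β, by rw [hα, hβ, Fq_add_sq]; ring⟩

/-- The Artin–Schreier map as an additive group hom. -/
noncomputable def asHom (f : ℕ) : Fq f →+ Fq f :=
  AddMonoidHom.mk' (fun x => x^2 + x) (by
    intro a b
    show (a + b)^2 + (a + b) = (a^2 + a) + (b^2 + b)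
    rw [Fq_add_sq]
    ring)

lemma mem_asHom_range {x : Fq f} : x ∈ (asHom f).range ↔ ASp x := by
  constructor
  · rintro ⟨α, hα⟩; exact ⟨α, hα.symm⟩
  · rintro ⟨α, hα⟩; exact ⟨α, hα.symm⟩

lemma asHom_ker_card : Nat.card (asHom f).ker = 2 := by
  have hset : ((asHom f).ker : Set (Fq f)) = {0, 1} := by
    ext x
    simp only [SetLike.mem_coe, AddMonoidHom.mem_ker, Set.mem_insert_iff, Set.mem_singleton_iff]
    constructor
    · intro h
      have h2 : x * (x + 1) = 0 := by
        have : (asHom f) x = x^2 + x := rfl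
        rw [this] at h
        linear_combination h
      rcases mul_eq_zero.mp h2 with h3 | h3
      · exact Or.inl h3
      · right
        have := eq_neg_of_add_eq_zero_left h3
        rw [this, CharTwo.neg_eq]
    · intro h
      rcases h with h | h <;> subst h
      · show (0 : Fq f)^2 + 0 = 0
        simp
      · show (1 : Fq f)^2 + 1 = 0
        rw [one_pow]
        exact Fq_add_self 1
  have : Nat.card (asHom f).ker = ({0, 1} : Set (Fq f)).ncard := by
    rw [← Nat.card_coe_set_eq]
    exact Nat.card_congr (Equiv.setCongr hset)
  rw [this, Set.ncard_pair (zero_ne_one)]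

lemma quot_AS_card : Nat.card (Fq f ⧸ (asHom f).range) = 2 := by
  have h1 : Nat.card (Fq f) = Nat.card (Fq f ⧸ (asHom f).range) * Nat.card (asHom f).range :=
    AddSubgroup.card_eq_card_quotient_mul_card_addSubgroup _
  have h2 : Nat.card (Fq f ⧸ (asHom f).ker) = Nat.card (asHom f).range :=
    Nat.card_congr (QuotientAddGroup.quotientKerEquivRange (asHom f)).toEquiv
  have h3 : Nat.card (Fq f) = Nat.card (Fq f ⧸ (asHom f).ker) * Nat.card (asHom f).ker :=
    AddSubgroup.card_eq_card_quotient_mul_card_addSubgroup _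
  have hpos : 0 < Nat.card (asHom f).range := Nat.card_pos
  have hker := asHom_ker_card (f := f)
  rw [hker, h2] at h3
  have key : Nat.card (Fq f ⧸ (asHom f).range) * Nat.card (asHom f).range =
      2 * Nat.card (asHom f).range := by
    rw [← h1, h3]
    exact mul_comm _ _
  exact Nat.eq_of_mul_eq_mul_right hpos key

/-- Index-2 property: sum of two non-Artin–Schreier elements is Artin–Schreier. -/
lemma ASp_index2 {x y : Fq f} (hx : ¬ ASp x) (hy : ¬ ASp y) : ASp (x + y) := by
  set H := (asHom f).range
  have hxq : (x : Fq f ⧸ H) ≠ 0 := by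
    rw [Ne, QuotientAddGroup.eq_zero_iff]
    exact fun h => hx (mem_asHom_range.mp h)
  have hyq : (y : Fq f ⧸ H) ≠ 0 := by
    rw [Ne, QuotientAddGroup.eq_zero_iff]
    exact fun h => hy (mem_asHom_range.mp h)
  obtain ⟨u, v, huv, huniv⟩ := Nat.card_eq_two_iff.mp (quot_AS_card (f := f))
  have hmem : ∀ z : Fq f ⧸ H, z = u ∨ z = v := by
    intro z
    have : z ∈ ({u, v} : Set _) := huniv ▸ Set.mem_univ z
    simpa using this
  have hxy : (x : Fq f ⧸ H) = (y : Fq f ⧸ H) := by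
    rcases hmem 0 with h0 | h0 <;> rcases hmem x with h1 | h1 <;> rcases hmem y with h2 | h2 <;>
      first
        | (exfalso; apply hxq; rw [h1, ← h0])
        | (exfalso; apply hyq; rw [h2, ← h0])
        | rw [h1, h2]
  have : -x + y ∈ H := (QuotientAddGroup.eq).mp hxy
  rw [CharTwo.neg_eq] at this
  exact mem_asHom_range.mp this

end SpAux

namespace SpAux
variable {f m : ℕ}

/-- `B` as a bundled bilinear form. -/
noncomputable def Bbil : LinearMap.BilinForm (Fq f) (V f m) :=
  LinearMap.mk₂ (Fq f) B B_add_left (fun c u w => by rw [B_smul_left, smul_eq_mul])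
    B_add_right (fun c u w => by rw [B_smul_right, smul_eq_mul])

lemma Bbil_apply (u w : V f m) : Bbil u w = B u w := rfl

lemma Bbil_nondeg : (Bbil : LinearMap.BilinForm (Fq f) (V f m)).Nondegenerate := by
  refine ⟨fun u hu => ?_, fun u hu => ?_⟩
  · apply B_right_cancel (v := (0 : V f m))
    intro w
    rw [B_zero_left, ← Bbil_apply]
    exact hu w
  · apply B_right_cancel (v := (0 : V f m))
    intro w
    rw [B_zero_left, B_symm, ← Bbil_apply]
    exact hu w

lemma Bbil_refl : (Bbil : LinearMap.BilinForm (Fq f) (V f m)).IsRefl := by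
  intro u w h
  rw [Bbil_apply, B_symm] at h
  exact h

lemma smul_fixed_inv {g : Sp f m} {v : V f m} (h : g • v = v) : g⁻¹ • v = v := by
  conv_lhs => rw [← h]
  exact inv_smul_smul g v

/-- Every element orthogonal to the fixed space of `g` is in the range of `1 + g`. -/
lemma mem_range_one_add {g : Sp f m} {c : V f m}
    (hc : ∀ v : V f m, g • v = v → B c v = 0) : ∃ d : V f m, d + g • d = c := by
  classical
  set T : V f m →ₗ[Fq f] V f m :=
    (LinearMap.id : V f m →ₗ[Fq f] V f m) +
      ((g : (V f m →ₗ[Fq f] V f m)ˣ) : V f m →ₗ[Fq f] V f m) with hT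
  have hTapp : ∀ x : V f m, T x = x + g • x := fun x => rfl
  have hker : ∀ x : V f m, x ∈ LinearMap.ker T ↔ g • x = x := by
    intro x
    rw [LinearMap.mem_ker, hTapp]
    constructor
    · intro h
      exact (V_eq_of_add_eq_zero h).symm
    · intro h
      rw [h]
      exact V_add_self x
  set W := LinearMap.ker T with hW
  have hle : LinearMap.range T ≤ Bbil.orthogonal W := by
    rintro x ⟨u, rfl⟩
    intro n hn
    have hgn : g • n = n := (hker n).mp hn
    show Bbil n (T u) = 0
    rw [Bbil_apply, hTapp, B_add_right]
    have : B n (g • u) = B n u := by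
      conv_lhs => rw [← hgn, B_sp]
    rw [this, B_symm]
    exact Fq_add_self _
  have hdim1 : Module.finrank (Fq f) (Bbil.orthogonal W) =
      Module.finrank (Fq f) (V f m) - Module.finrank (Fq f) W :=
    LinearMap.BilinForm.finrank_orthogonal Bbil_nondeg W
  have hdim2 : Module.finrank (Fq f) (LinearMap.range T) + Module.finrank (Fq f) W =
      Module.finrank (Fq f) (V f m) := LinearMap.finrank_range_add_finrank_ker T
  have heq : LinearMap.range T = Bbil.orthogonal W := by
    apply Submodule.eq_of_le_of_finrank_eq hle
    rw [hdim1]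
    omega
  have hcmem : c ∈ Bbil.orthogonal W := by
    intro n hn
    have hgn : g • n = n := (hker n).mp hn
    show Bbil n c = 0
    rw [Bbil_apply, B_symm]
    exact hc n hgn
  rw [← heq] at hcmem
  obtain ⟨d, hd⟩ := hcmem
  exact ⟨d, by rw [← hTapp, hd]⟩

lemma cc_inv_orth (g : Sp f m) : ∃ d : V f m, d + g • d = cc g⁻¹ := by
  apply mem_range_one_add
  intro v hv
  apply sq_inj (y := 0)
  rw [zero_pow (by norm_num)]
  have h := cc_spec g⁻¹ v
  rw [smul_fixed_inv hv] at h
  linear_combination -h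

/-- The affine action changes `Qplus` by an Artin–Schreier element. -/
lemma Q_astar (g : Sp f m) (v : V f m) : ASp (Qplus (astar g v) + Qplus v) := by
  obtain ⟨d, hd⟩ := cc_inv_orth g
  set s := v + d with hs
  refine ⟨B (cc g) s, ?_⟩
  have e1 : astar g v = g • s + d := by
    rw [astar, ← hd, hs, sp_smul_add]
    abel
  have e2 : Qplus (astar g v) = Qplus (g • s) + Qplus d + B (g • s) d := by
    rw [e1, Qplus_add]
  have e3 : Qplus (g • s) = Qplus s + B (cc g) s ^ 2 := cc_spec g s
  have e4 : Qplus s = Qplus v + Qplus d + B v d := by rw [hs, Qplus_add]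
  have hd' : cc g⁻¹ + g • d = d := by
    rw [← hd, add_assoc, V_add_self, add_zero]
  have e5 : B (g • s) d = B s (cc g) + B s d := by
    conv_lhs => rw [← hd']
    rw [B_add_right, cc_inv, B_sp, B_sp, B_symm s (cc g)]
  have e6 : B v d + B s d = 0 := by
    rw [← B_add_left]
    have hvs : v + s = d := by
      rw [hs, ← add_assoc, V_add_self, zero_add]
    rw [hvs, B_self]
  have e7 : B s (cc g) = B (cc g) s := B_symm _ _
  linear_combination e2 + e3 + e4 + e5 + e7 + e6 + Fq_add_self (Qplus d) + Fq_add_self (Qplus v)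

end SpAux

namespace SpAux
variable {f m : ℕ}

/-- Counting fixed points of the affine action equals fixed vectors of the linear action. -/
lemma card_fix_astar (g : Sp f m) :
    Nat.card {v : V f m | astar g v = v} = Nat.card {v : V f m | g • v = v} := by
  obtain ⟨d, hd⟩ := cc_inv_orth g
  have hfixd : astar g d = d := by
    rw [astar, ← hd]
    rw [← add_assoc, add_comm (g • d) d, add_assoc, V_add_self, add_zero]
  symm
  apply Nat.card_congr
  refine ⟨fun x => ⟨x.1 + d, ?_⟩, fun y => ⟨y.1 + d, ?_⟩, ?_, ?_⟩
  · have hx := x.2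
    simp only [Set.mem_setOf_eq] at hx ⊢
    rw [astar, sp_smul_add, hx]
    have : g • d + cc g⁻¹ = d := by
      conv_rhs => rw [← hfixd, astar]
    rw [add_assoc, this]
  · have hy := y.2
    simp only [Set.mem_setOf_eq] at hy ⊢
    have hy' : g • y.1 + cc g⁻¹ = y.1 := hy
    have hgy : g • y.1 = y.1 + cc g⁻¹ := by
      conv_rhs => rw [← hy']
      rw [add_assoc, V_add_self, add_zero]
    have hgd : g • d = d + cc g⁻¹ := by
      have hfd : g • d + cc g⁻¹ = d := hfixd
      conv_rhs => rw [← hfd]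
      rw [add_assoc, V_add_self, add_zero]
    rw [sp_smul_add, hgy, hgd]
    calc y.1 + cc g⁻¹ + (d + cc g⁻¹) = y.1 + d + (cc g⁻¹ + cc g⁻¹) := by abel
    _ = y.1 + d := by rw [V_add_self, add_zero]
  · intro x
    apply Subtype.ext
    show x.1 + d + d = x.1
    rw [add_assoc, V_add_self, add_zero]
  · intro y
    apply Subtype.ext
    show y.1 + d + d = y.1
    rw [add_assoc, V_add_self, add_zero]

/-- Fixed cosets of `G ⧸ Ogrp (Qw w)` are counted by fixed points of the affine action
in the orbit of `w`. -/
lemma card_fixed_cosets (g : Sp f m) (w : V f m) (Q : V f m → Fq f) (hQ : ∀ u, Q u = Qw w u) :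
    Nat.card {ω : Sp f m ⧸ Ogrp Q | g • ω = ω} =
      Nat.card {v : V f m | astar g v = v ∧ ∃ x : Sp f m, astar x w = v} := by
  obtain rfl : Q = Qw w := funext hQ
  have hwd : ∀ x y : Sp f m, (QuotientGroup.leftRel (Ogrp (Qw w))).r x y →
      astar x w = astar y w := by
    intro x y hxy
    rw [QuotientGroup.leftRel_apply] at hxy
    have : astar (x⁻¹ * y) w = w := mem_Ogrp_Qw.mp hxy
    calc astar x w = astar x (astar (x⁻¹ * y) w) := by rw [this]
    _ = astar (x * (x⁻¹ * y)) w := (astar_mul _ _ _).symm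
    _ = astar y w := by rw [mul_inv_cancel_left]
  let Φ : Sp f m ⧸ Ogrp (Qw w) → V f m := fun ω => Quotient.liftOn ω (fun x => astar x w) hwd
  have hΦmk : ∀ x : Sp f m, Φ (QuotientGroup.mk x) = astar x w := fun x => rfl
  have hΦinj : Function.Injective Φ := by
    intro ω₁ ω₂ h
    induction ω₁ using Quotient.inductionOn with | h x =>
    induction ω₂ using Quotient.inductionOn with | h y =>
    rw [hΦmk, hΦmk] at h
    have : astar (x⁻¹ * y) w = w := by
      rw [astar_mul, ← h, astar_inv_astar]
    exact Quotient.sound ((QuotientGroup.leftRel_apply).mpr (mem_Ogrp_Qw.mpr this))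
  have hΦeq : ∀ ω, Φ (g • ω) = astar g (Φ ω) := by
    intro ω
    induction ω using Quotient.inductionOn with | h x =>
    show Φ (g • QuotientGroup.mk x) = _
    rw [MulAction.Quotient.smul_mk, hΦmk, hΦmk, smul_eq_mul, astar_mul]
  refine Nat.card_eq_of_bijective (fun ω =>
    (⟨Φ ω.1, by rw [← hΦeq, ω.2], by
        obtain ⟨x, hx⟩ := Quotient.exists_rep ω.1
        exact ⟨x, by rw [← hx]; rfl⟩⟩ :
      {v : V f m | astar g v = v ∧ ∃ x : Sp f m, astar x w = v})) ⟨?_, ?_⟩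
  · intro a b hab
    simp only [Subtype.mk.injEq] at hab
    exact Subtype.ext (hΦinj hab)
  · rintro ⟨v, hfix, x, hx⟩
    refine ⟨⟨QuotientGroup.mk x, ?_⟩, ?_⟩
    · apply hΦinj
      rw [hΦeq, hΦmk, hx, hfix]
    · simp only [Subtype.mk.injEq]
      rw [hΦmk, hx]

end SpAux

namespace SpAux
variable {f m : ℕ}

/-- The base point for the minus-type form. -/
noncomputable def w0 (hm : 0 < m) (a : Fq f) : V f m :=
  (Pi.single ⟨0, hm⟩ (sqt a), Pi.single ⟨0, hm⟩ 1)

lemma B_w0 (hm : 0 < m) (a : Fq f) (u : V f m) :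
    B (w0 hm a) u = sqt a * u.2 ⟨0, hm⟩ + u.1 ⟨0, hm⟩ := by
  unfold B w0
  simp only [Pi.single_apply, ite_mul, zero_mul, one_mul]
  rw [Finset.sum_add_distrib, Finset.sum_ite_eq', Finset.sum_ite_eq']
  simp

lemma Qplus_w0 (hm : 0 < m) (a : Fq f) : Qplus (w0 hm a) = sqt a := by
  unfold Qplus w0
  simp only [Pi.single_apply, ite_mul, zero_mul]
  rw [Finset.sum_ite_eq']
  simp

lemma Qminus_eq_Qw (hm : 0 < m) (a : Fq f) (u : V f m) :
    Qminus hm a u = Qw (w0 hm a) u := by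
  unfold Qminus Qw Qplus
  rw [B_w0, Fq_add_sq, mul_pow, sqt_sq]
  ring

lemma sqt_a_not_ASp (a : Fq f) (ha : ∀ α : Fq f, α ^ 2 + α ≠ a) : ¬ ASp (sqt a) := by
  rintro ⟨α, hα⟩
  have : (α^2)^2 + α^2 = a := by rw [← Fq_add_sq, ← hα, sqt_sq]
  exact ha (α^2) this

lemma fix_partition (g : Sp f m) (hm : 0 < m) (a : Fq f) (ha : ∀ α : Fq f, α ^ 2 + α ≠ a) :
    Nat.card {v : V f m | astar g v = v} =
      Nat.card {v : V f m | astar g v = v ∧ ∃ x : Sp f m, astar x (0 : V f m) = v} +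
        Nat.card {v : V f m | astar g v = v ∧ ∃ x : Sp f m, astar x (w0 hm a) = v} := by
  have hw0AS : ¬ ASp (sqt a) := sqt_a_not_ASp a ha
  have hcover : {v : V f m | astar g v = v} =
      {v : V f m | astar g v = v ∧ ∃ x : Sp f m, astar x (0 : V f m) = v} ∪
        {v : V f m | astar g v = v ∧ ∃ x : Sp f m, astar x (w0 hm a) = v} := by
    ext v
    simp only [Set.mem_setOf_eq, Set.mem_union]
    constructor
    · intro hv
      by_cases hAS : ASp (Qplus v)
      · left
        refine ⟨hv, ?_⟩
        obtain ⟨α, hα⟩ := hAS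
        obtain ⟨t, ht⟩ := reach (0 : V f m) v ⟨α, by
          rw [zero_add, Qplus_zero, add_zero, hα]⟩
        rw [zero_add] at ht
        exact ⟨t, ht⟩
      · right
        refine ⟨hv, ?_⟩
        have hsum : ASp (Qplus v + sqt a) := ASp_index2 hAS hw0AS
        have hvw : w0 hm a + (v + w0 hm a) = v := by
          rw [add_comm v, ← add_assoc, V_add_self, zero_add]
        obtain ⟨α, hα⟩ := hsum
        obtain ⟨t, ht⟩ := reach (w0 hm a) (v + w0 hm a) ⟨α, by
          rw [hvw, Qplus_w0, hα]⟩
        rw [hvw] at ht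
        exact ⟨t, ht⟩
    · rintro (⟨h, _⟩ | ⟨h, _⟩) <;> exact h
  have hdisj : Disjoint
      {v : V f m | astar g v = v ∧ ∃ x : Sp f m, astar x (0 : V f m) = v}
      {v : V f m | astar g v = v ∧ ∃ x : Sp f m, astar x (w0 hm a) = v} := by
    rw [Set.disjoint_left]
    rintro v ⟨_, x, hx⟩ ⟨_, y, hy⟩
    have h0 : ASp (Qplus v) := by
      have := Q_astar x (0 : V f m)
      rw [hx, Qplus_zero, add_zero] at this
      exact this
    have h1 : ASp (Qplus v + sqt a) := by
      have := Q_astar y (w0 hm a)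
      rw [hy, Qplus_w0] at this
      exact this
    apply hw0AS
    have := ASp_add h0 h1
    rw [← add_assoc, Fq_add_self, zero_add] at this
    exact this
  rw [Nat.card_coe_set_eq, Nat.card_coe_set_eq, Nat.card_coe_set_eq, hcover,
    Set.ncard_union_eq hdisj (Set.toFinite _) (Set.toFinite _)]

end SpAux

open SpAux in
/-- The permutation character of `Sp_{2m}(2^f)` on its natural module equals the sum of the
permutation characters on `G/O⁺` and `G/O⁻`. -/
theorem permChar_natural_eq_permChar_cosets_plus_add_minus
    (f m : ℕ) (hf : 1 ≤ f) (hm : 0 < m) (a : Fq f)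
    (ha : ∀ α : Fq f, α ^ 2 + α ≠ a) (g : Sp f m) :
    Nat.card {v : V f m | g • v = v} =
      Nat.card {ω : Sp f m ⧸ Oplus f m | g • ω = ω} +
        Nat.card {ω : Sp f m ⧸ Ominus f m hm a | g • ω = ω} := by
  have hplus : Nat.card {ω : Sp f m ⧸ Ogrp (Qplus (f := f) (m := m)) | g • ω = ω} =
      Nat.card {v : V f m | astar g v = v ∧ ∃ x : Sp f m, astar x (0 : V f m) = v} :=
    card_fixed_cosets g 0 Qplus (fun u => by
      unfold Qw
      rw [B_zero_left]
      ring)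
  have hminus : Nat.card {ω : Sp f m ⧸ Ogrp (Qminus hm a) | g • ω = ω} =
      Nat.card {v : V f m | astar g v = v ∧ ∃ x : Sp f m, astar x (w0 hm a) = v} :=
    card_fixed_cosets g (w0 hm a) (Qminus hm a) (Qminus_eq_Qw hm a)
  calc Nat.card {v : V f m | g • v = v}
      = Nat.card {v : V f m | astar g v = v} := (card_fix_astar g).symm
    _ = Nat.card {v : V f m | astar g v = v ∧ ∃ x : Sp f m, astar x (0 : V f m) = v} +
        Nat.card {v : V f m | astar g v = v ∧ ∃ x : Sp f m, astar x (w0 hm a) = v} :=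
      fix_partition g hm a ha
    _ = Nat.card {ω : Sp f m ⧸ Oplus f m | g • ω = ω} +
        Nat.card {ω : Sp f m ⧸ Ominus f m hm a | g • ω = ω} := by
      rw [← hplus, ← hminus]
      rfl
end

section
/- Every element of G = Sp(V) is conjugate in G to an element of O⁺ or to an element of O⁻: for every g ∈ G there exists h ∈ G such that h g h⁻¹ ∈ O⁺ or h g h⁻¹ ∈ O⁻. -/
set_option synthInstance.maxHeartbeats 1000000
set_option maxHeartbeats 1000000

open scoped BigOperators

section AS
variable {F : Type*} [Field F] [Finite F] [CharP F 2]

noncomputable def asHom : F →+ F where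
  toFun t := t^2 + t
  map_zero' := by simp
  map_add' s t := by
    have h2 : (s + t)^2 = s^2 + t^2 := CharTwo.add_sq s t
    rw [h2]; ring

lemma asHom_apply (t : F) : asHom t = t^2 + t := rfl

lemma asHom_ker_carrier : ((asHom.ker : AddSubgroup F) : Set F) = {0, 1} := by
  ext t
  simp only [SetLike.mem_coe, AddMonoidHom.mem_ker, asHom_apply,
    Set.mem_insert_iff, Set.mem_singleton_iff]
  constructor
  · intro h
    have h3 : t * (t + 1) = 0 := by linear_combination h
    rcases mul_eq_zero.1 h3 with h1 | h1
    · exact Or.inl h1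
    · right
      have := CharTwo.add_self_eq_zero (1 : F)
      linear_combination h1 - this
  · rintro (rfl | rfl)
    · simp
    · have := CharTwo.add_self_eq_zero (1 : F); linear_combination this

lemma asHom_ker_card : Nat.card (asHom.ker : AddSubgroup F) = 2 := by
  have h := asHom_ker_carrier (F := F)
  have h2 : Nat.card (asHom.ker : AddSubgroup F) = Nat.card ({0, 1} : Set F) :=
    Nat.card_congr (Equiv.setCongr h)
  rw [h2, Nat.card_coe_set_eq, Set.ncard_pair (zero_ne_one (α := F))]

lemma two_mul_range_card :
    2 * ((asHom.range : AddSubgroup F) : Set F).ncard = Nat.card F := by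
  have h1 : Nat.card (F ⧸ (asHom : F →+ F).ker) * Nat.card (asHom : F →+ F).ker = Nat.card F := by
    rw [← Nat.card_prod]
    exact (Nat.card_congr (AddSubgroup.addGroupEquivQuotientProdAddSubgroup
      (s := (asHom : F →+ F).ker))).symm
  have h2 : Nat.card (F ⧸ (asHom : F →+ F).ker) = Nat.card (asHom : F →+ F).range :=
    Nat.card_congr (QuotientAddGroup.quotientKerEquivRange (asHom : F →+ F)).toEquiv
  rw [h2, asHom_ker_card] at h1
  rw [← Nat.card_coe_set_eq]
  rw [mul_comm] at h1
  exact h1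

lemma AS_sum_mem (x y : F) (hx : ∀ t : F, t^2 + t ≠ x) (hy : ∀ t : F, t^2 + t ≠ y) :
    ∃ t : F, t^2 + t = x + y := by
  classical
  set A : Set F := ((asHom.range : AddSubgroup F) : Set F) with hA
  have hxA : x ∉ A := by
    rintro ⟨t, ht⟩; exact hx t ht
  have hyA : y ∉ A := by
    rintro ⟨t, ht⟩; exact hy t ht
  set T : Set F := (fun s => x + s) '' A with hT
  have hsub : T ⊆ Aᶜ := by
    rintro _ ⟨s, hs, rfl⟩ hmem
    apply hxA
    have : (x + s) + s ∈ A := AddSubgroup.add_mem _ hmem hs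
    rwa [add_assoc, CharTwo.add_self_eq_zero, add_zero] at this
  have hTcard : T.ncard = A.ncard := Set.ncard_image_of_injective A (add_right_injective x)
  have hcompl : A.ncard + Aᶜ.ncard = Nat.card F := Set.ncard_add_ncard_compl A
  have h2 := two_mul_range_card (F := F)
  -- Aᶜ.ncard = A.ncard
  rw [← hA] at h2
  have hac : Aᶜ.ncard = A.ncard := by omega
  have hTeq : T = Aᶜ := Set.eq_of_subset_of_ncard_le hsub (by rw [hTcard, hac]) (Set.toFinite _)
  have hyT : y ∈ T := by rw [hTeq]; exact hyA
  obtain ⟨s, hs, hys⟩ := hyT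
  obtain ⟨t, ht⟩ := hs
  refine ⟨t, ?_⟩
  rw [asHom_apply] at ht
  have : x + y = s := by rw [← hys, ← add_assoc, CharTwo.add_self_eq_zero, zero_add]
  rw [ht, this]

end AS
universe u

section Helpers
variable {F : Type*} [Field F] [Finite F] [CharP F 2]

noncomputable def mySqrt (x : F) : F := (frobeniusEquiv F 2).symm x

lemma mySqrt_sq (x : F) : (mySqrt x)^2 = x := by
  have h := (frobeniusEquiv F 2).apply_symm_apply x
  rwa [frobeniusEquiv_apply, frobenius_def] at h

lemma mySqrt_ne_zero {x : F} (hx : x ≠ 0) : mySqrt x ≠ 0 := by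
  intro h
  apply hx
  rw [← mySqrt_sq x, h]; ring

variable {W : Type u} [AddCommGroup W] [Module F W]

lemma char2_eq_of_add_eq_zero {x y : F} (h : x + y = 0) : x = y := by
  have := CharTwo.add_eq_iff_eq_add.mp h
  simpa using this

lemma bl_symm (Bl : W →ₗ[F] W →ₗ[F] F) (halt : ∀ v, Bl v v = 0) (u w : W) :
    Bl u w = Bl w u := by
  have h := halt (u + w)
  simp only [map_add, LinearMap.add_apply, halt u, halt w, zero_add, add_zero] at h
  exact (char2_eq_of_add_eq_zero h).symm

lemma q_zero (Q : W → F) (hsc : ∀ (c : F) v, Q (c • v) = c^2 * Q v) : Q 0 = 0 := by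
  have := hsc 0 0
  simpa using this

/-- A bilinear form restricted to a submodule. -/
def blRes (Bl : W →ₗ[F] W →ₗ[F] F) (K : Submodule F W) : K →ₗ[F] K →ₗ[F] F :=
  LinearMap.mk₂ F (fun x y => Bl x y)
    (fun x x' y => by simp) (fun c x y => by simp) (fun x y y' => by simp)
    (fun c x y => by simp)

@[simp] lemma blRes_apply (Bl : W →ₗ[F] W →ₗ[F] F) (K : Submodule F W) (x y : K) :
    blRes Bl K x y = Bl x y := rfl

/-- Find a partner vector with pairing 1. -/
lemma exists_partner (Bl : W →ₗ[F] W →ₗ[F] F)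
    (hnd : ∀ v, (∀ w, Bl v w = 0) → v = 0) {v : W} (hv : v ≠ 0) :
    ∃ w, Bl v w = 1 := by
  by_cases h : ∀ w, Bl v w = 0
  · exact absurd (hnd v h) hv
  push_neg at h
  obtain ⟨w0, hw0⟩ := h
  refine ⟨(Bl v w0)⁻¹ • w0, ?_⟩
  rw [map_smul, smul_eq_mul, inv_mul_cancel₀ hw0]

/-- Improve a partner to a hyperbolic partner. -/
lemma exists_hyperbolic_partner (Bl : W →ₗ[F] W →ₗ[F] F)
    (halt : ∀ v, Bl v v = 0) (hnd : ∀ v, (∀ w, Bl v w = 0) → v = 0)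
    (Q : W → F) (hpol : ∀ u w, Q (u + w) = Q u + Q w + Bl u w)
    (hsc : ∀ (c : F) v, Q (c • v) = c^2 * Q v)
    {u : W} (hu : u ≠ 0) (hQu : Q u = 0) :
    ∃ w, Bl u w = 1 ∧ Q w = 0 := by
  obtain ⟨w0, hw0⟩ := exists_partner Bl hnd hu
  refine ⟨w0 + Q w0 • u, ?_, ?_⟩
  · rw [map_add, map_smul, halt u, smul_zero, add_zero, hw0]
  · rw [hpol, hsc, hQu, mul_zero, add_zero, map_smul, smul_eq_mul,
      bl_symm Bl halt w0 u, hw0, mul_one, CharTwo.add_self_eq_zero]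

/-- In dimension ≥ 4 there is a nonzero isotropic vector. -/
lemma exists_isotropic (Bl : W →ₗ[F] W →ₗ[F] F)
    (halt : ∀ v, Bl v v = 0) (hnd : ∀ v, (∀ w, Bl v w = 0) → v = 0)
    [FiniteDimensional F W] (hrk : 4 ≤ Module.finrank F W)
    (Q : W → F) (hpol : ∀ u w, Q (u + w) = Q u + Q w + Bl u w)
    (hsc : ∀ (c : F) v, Q (c • v) = c^2 * Q v) :
    ∃ u, u ≠ 0 ∧ Q u = 0 := by
  have hnt : Nontrivial W := by
    apply Module.nontrivial_of_finrank_pos (R := F); omega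
  obtain ⟨v, hv⟩ := exists_ne (0 : W)
  by_cases hQv : Q v = 0
  · exact ⟨v, hv, hQv⟩
  obtain ⟨w, hw⟩ := exists_partner Bl hnd hv
  by_cases hQw : Q w = 0
  · refine ⟨w, ?_, hQw⟩
    intro h; rw [h, map_zero] at hw; exact one_ne_zero hw.symm
  -- pass to the complement of v, w
  set ψ : W →ₗ[F] F × F := (Bl v).prod (Bl w) with hψ
  have hker : LinearMap.ker ψ ≠ ⊥ := by
    intro hbot
    have h1 := LinearMap.finrank_range_add_finrank_ker ψ
    have h2 : Module.finrank F (LinearMap.range ψ) ≤ Module.finrank F (F × F) :=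
      Submodule.finrank_le _
    have h3 : Module.finrank F (F × F) = 2 := by
      simp [Module.finrank_prod]
    rw [hbot, finrank_bot] at h1
    omega
  obtain ⟨v', hv'mem, hv'⟩ := Submodule.exists_mem_ne_zero_of_ne_bot hker
  have hv'k : Bl v v' = 0 ∧ Bl w v' = 0 := by
    have := hv'mem
    rw [LinearMap.mem_ker, hψ] at this
    exact ⟨congrArg Prod.fst this, congrArg Prod.snd this⟩
  by_cases hQv' : Q v' = 0
  · exact ⟨v', hv', hQv'⟩
  refine ⟨mySqrt (Q v') • v + mySqrt (Q v) • v', ?_, ?_⟩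
  · intro h
    have hbw : Bl w (mySqrt (Q v') • v + mySqrt (Q v) • v') = mySqrt (Q v') := by
      rw [map_add, map_smul, map_smul, bl_symm Bl halt w v, hw,
        hv'k.2, smul_eq_mul, smul_eq_mul, mul_one, mul_zero, add_zero]
    rw [h, map_zero] at hbw
    exact mySqrt_ne_zero hQv' hbw.symm
  · have hb : Bl (mySqrt (Q v') • v) (mySqrt (Q v) • v') = 0 := by
      simp [hv'k.1]
    rw [hpol, hsc, hsc, hb, mySqrt_sq, mySqrt_sq, add_zero, mul_comm,
      CharTwo.add_self_eq_zero]

end Helpers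

section Main
variable {F : Type*} [Field F] [Finite F] [CharP F 2]
variable {W : Type u} [AddCommGroup W] [Module F W]

/-- Dimension-2 anisotropic case: find a pair with `Q` values `1` and `a`. -/
lemma exists_aniso_pair (Bl : W →ₗ[F] W →ₗ[F] F)
    (halt : ∀ v, Bl v v = 0) (hnd : ∀ v, (∀ w, Bl v w = 0) → v = 0)
    (Q : W → F) (hpol : ∀ u w, Q (u + w) = Q u + Q w + Bl u w)
    (hsc : ∀ (c : F) v, Q (c • v) = c^2 * Q v)
    (a : F) (ha : ∀ t : F, t ^ 2 + t ≠ a)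
    (hnt : ∃ v : W, v ≠ 0) (hno : ¬ ∃ u, u ≠ 0 ∧ Q u = 0) :
    ∃ e0 f0, Bl e0 f0 = 1 ∧ Q e0 = 1 ∧ Q f0 = a := by
  obtain ⟨v, hv⟩ := hnt
  have hQv : Q v ≠ 0 := fun h => hno ⟨v, hv, h⟩
  obtain ⟨e0, he0⟩ : ∃ e0 : W, e0 = (mySqrt (Q v))⁻¹ • v := ⟨_, rfl⟩
  have hQe0 : Q e0 = 1 := by
    rw [he0, hsc]
    have h1 : ((mySqrt (Q v))⁻¹)^2 = (Q v)⁻¹ := by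
      rw [inv_pow, mySqrt_sq]
    rw [h1, inv_mul_cancel₀ hQv]
  have he0ne : e0 ≠ 0 := by
    intro h; rw [h, q_zero Q hsc] at hQe0; exact one_ne_zero hQe0.symm
  obtain ⟨f0, hf0⟩ := exists_partner Bl hnd he0ne
  have hexp : ∀ t : F, Q (f0 + t • e0) = Q f0 + (t^2 + t) := by
    intro t
    rw [hpol, hsc, hQe0, mul_one, map_smul, smul_eq_mul, bl_symm Bl halt f0 e0,
      hf0, mul_one]
    ring
  have hc' : ∀ t : F, t ^ 2 + t ≠ Q f0 := by
    intro t ht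
    have hz : Q (f0 + t • e0) = 0 := by
      rw [hexp, ← ht, CharTwo.add_self_eq_zero]
    have hzne : f0 + t • e0 ≠ 0 := by
      intro h
      have h2 := congrArg (Bl e0) h
      rw [map_add, map_smul, halt, smul_zero, add_zero, hf0, map_zero] at h2
      exact one_ne_zero h2
    exact hno ⟨_, hzne, hz⟩
  obtain ⟨s, hs⟩ := AS_sum_mem a (Q f0) ha hc'
  refine ⟨e0, f0 + s • e0, ?_, hQe0, ?_⟩
  · rw [map_add, map_smul, halt, smul_zero, add_zero, hf0]
  · rw [hexp, hs]
    calc Q f0 + (a + Q f0) = a + (Q f0 + Q f0) := by ring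
    _ = a := by rw [CharTwo.add_self_eq_zero, add_zero]

end Main

section Induction
variable {F : Type*} [Field F] [Finite F] [CharP F 2]

theorem adapted_basis (a : F) (ha : ∀ t : F, t ^ 2 + t ≠ a) (m : ℕ) :
    ∀ (W : Type u) (_ : AddCommGroup W) (_ : Module F W) (_ : FiniteDimensional F W)
      (Bl : W →ₗ[F] W →ₗ[F] F),
      (∀ v, Bl v v = 0) →
      (∀ v, (∀ w, Bl v w = 0) → v = 0) →
      Module.finrank F W = 2 * m →
      ∀ Q : W → F,
        (∀ u w, Q (u + w) = Q u + Q w + Bl u w) →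
        (∀ (c : F) v, Q (c • v) = c ^ 2 * Q v) →
        ∃ (e fv : Fin m → W) (ε : Bool),
          (∀ i j, Bl (e i) (e j) = 0) ∧
          (∀ i j, Bl (fv i) (fv j) = 0) ∧
          (∀ i j, Bl (e i) (fv j) = if i = j then 1 else 0) ∧
          (∀ i, Q (e i) = if ε = true ∧ (i : ℕ) = 0 then 1 else 0) ∧
          (∀ i, Q (fv i) = if ε = true ∧ (i : ℕ) = 0 then a else 0) := by
  induction m with
  | zero =>
    intro W _ _ _ Bl halt hnd hrk Q hpol hsc
    exact ⟨fun i => i.elim0, fun i => i.elim0, false,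
      fun i => i.elim0, fun i => i.elim0, fun i => i.elim0, fun i => i.elim0, fun i => i.elim0⟩
  | succ m ih =>
    intro W _ _ _ Bl halt hnd hrk Q hpol hsc
    rcases Nat.eq_zero_or_pos m with hm | hm
    · -- base case: dimension 2
      subst hm
      have hnt : Nontrivial W := by
        apply Module.nontrivial_of_finrank_pos (R := F); omega
      by_cases hiso : ∃ u, u ≠ 0 ∧ Q u = 0
      · obtain ⟨u, hu, hQu⟩ := hiso
        obtain ⟨w, hw1, hQw⟩ := exists_hyperbolic_partner Bl halt hnd Q hpol hsc hu hQu
        refine ⟨fun _ => u, fun _ => w, false, ?_, ?_, ?_, ?_, ?_⟩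
        · intro i j; exact halt u
        · intro i j; exact halt w
        · intro i j; rw [if_pos (show i = j by apply Fin.ext; omega)]; exact hw1
        · intro i; simp [hQu]
        · intro i; simp [hQw]
      · obtain ⟨e0, f0, h1, h2, h3⟩ := exists_aniso_pair Bl halt hnd Q hpol hsc a ha
          (exists_ne 0) hiso
        refine ⟨fun _ => e0, fun _ => f0, true, ?_, ?_, ?_, ?_, ?_⟩
        · intro i j; exact halt e0
        · intro i j; exact halt f0
        · intro i j; rw [if_pos (show i = j by apply Fin.ext; omega)]; exact h1
        · intro i
          rw [if_pos ⟨rfl, by omega⟩]; exact h2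
        · intro i
          rw [if_pos ⟨rfl, by omega⟩]; exact h3
    · -- inductive step: split off a hyperbolic plane
      obtain ⟨u, hu, hQu⟩ := exists_isotropic Bl halt hnd (by omega) Q hpol hsc
      obtain ⟨w, hw1, hQw⟩ := exists_hyperbolic_partner Bl halt hnd Q hpol hsc hu hQu
      have hwu : Bl w u = 1 := by rw [← bl_symm Bl halt]; exact hw1
      set ψ : W →ₗ[F] F × F := (Bl u).prod (Bl w) with hψ
      set K : Submodule F W := LinearMap.ker ψ with hK
      have hmem : ∀ x : W, x ∈ K ↔ Bl u x = 0 ∧ Bl w x = 0 := by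
        intro x
        rw [hK, LinearMap.mem_ker, hψ, LinearMap.prod_apply, Function.prod, Prod.mk_eq_zero]
      -- the restricted data
      have halt' : ∀ v : K, blRes Bl K v v = 0 := fun v => halt v
      have hnd' : ∀ v : K, (∀ z : K, blRes Bl K v z = 0) → v = 0 := by
        intro v hall
        have hvK := (hmem (v : W)).1 v.2
        have hvw : Bl (v : W) w = 0 := by rw [bl_symm Bl halt]; exact hvK.2
        have hvu : Bl (v : W) u = 0 := by rw [bl_symm Bl halt]; exact hvK.1
        have key : ∀ y : W, Bl (v : W) y = 0 := by
          intro y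
          have hy' : y + Bl u y • w + Bl w y • u ∈ K := by
            rw [hmem]
            constructor
            · rw [map_add, map_add, map_smul, map_smul, halt u, hw1, smul_zero,
                smul_eq_mul, mul_one, add_zero, CharTwo.add_self_eq_zero]
            · rw [map_add, map_add, map_smul, map_smul, halt w, hwu, smul_zero,
                smul_eq_mul, mul_one, add_zero, CharTwo.add_self_eq_zero]
          have h0 : Bl (v : W) (y + Bl u y • w + Bl w y • u) = 0 := hall ⟨_, hy'⟩
          rw [map_add, map_add, map_smul, map_smul, hvw, hvu, smul_zero, smul_zero,
            add_zero, add_zero] at h0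
          exact h0
        exact Subtype.ext (hnd _ key)
      have hsurj : Function.Surjective ψ := by
        rintro ⟨α, β⟩
        refine ⟨α • w + β • u, ?_⟩
        rw [hψ, LinearMap.prod_apply]
        have e1 : Bl u (α • w + β • u) = α := by
          rw [map_add, map_smul, map_smul, hw1, halt u, smul_zero, add_zero,
            smul_eq_mul, mul_one]
        have e2 : Bl w (α • w + β • u) = β := by
          rw [map_add, map_smul, map_smul, hwu, halt w, smul_zero, zero_add,
            smul_eq_mul, mul_one]
        simp [Function.prod, e1, e2]
      have hrk' : Module.finrank F K = 2 * m := by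
        have h1 := LinearMap.finrank_range_add_finrank_ker ψ
        rw [LinearMap.range_eq_top.mpr hsurj, finrank_top] at h1
        have h3 : Module.finrank F (F × F) = 2 := by
          simp [Module.finrank_prod]
        rw [h3, hrk] at h1
        rw [hK]
        omega
      obtain ⟨e', f', ε, hee, hff, hef, hQe, hQf⟩ := ih K inferInstance inferInstance
        inferInstance (blRes Bl K) halt' hnd' hrk' (fun v => Q (v : W))
        (fun x y => hpol x y) (fun c x => hsc c x)
      -- assemble
      have heK : ∀ i, (Bl u (e' i : W) = 0 ∧ Bl w (e' i : W) = 0) := fun i => (hmem _).1 (e' i).2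
      have hfK : ∀ i, (Bl u (f' i : W) = 0 ∧ Bl w (f' i : W) = 0) := fun i => (hmem _).1 (f' i).2
      refine ⟨Fin.snoc (fun i => ((e' i : W))) u, Fin.snoc (fun i => ((f' i : W))) w, ε,
        ?_, ?_, ?_, ?_, ?_⟩
      · intro i j
        refine Fin.lastCases ?_ (fun i => ?_) i <;> refine Fin.lastCases ?_ (fun j => ?_) j
        · simp [halt u]
        · simp only [Fin.snoc_last, Fin.snoc_castSucc]
          exact (heK j).1
        · simp only [Fin.snoc_last, Fin.snoc_castSucc]
          rw [bl_symm Bl halt]; exact (heK i).1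
        · simp only [Fin.snoc_castSucc]
          exact hee i j
      · intro i j
        refine Fin.lastCases ?_ (fun i => ?_) i <;> refine Fin.lastCases ?_ (fun j => ?_) j
        · simp [halt w]
        · simp only [Fin.snoc_last, Fin.snoc_castSucc]
          exact (hfK j).2
        · simp only [Fin.snoc_last, Fin.snoc_castSucc]
          rw [bl_symm Bl halt]; exact (hfK i).2
        · simp only [Fin.snoc_castSucc]
          exact hff i j
      · intro i j
        refine Fin.lastCases ?_ (fun i => ?_) i <;> refine Fin.lastCases ?_ (fun j => ?_) j
        · simp [hw1]
        · simp only [Fin.snoc_last, Fin.snoc_castSucc]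
          rw [if_neg (Fin.castSucc_lt_last j).ne']
          exact (hfK j).1
        · simp only [Fin.snoc_last, Fin.snoc_castSucc]
          rw [if_neg (Fin.castSucc_lt_last i).ne]
          rw [bl_symm Bl halt]; exact (heK i).2
        · simp only [Fin.snoc_castSucc]
          have h := hef i j
          simp only [blRes_apply] at h
          rw [h]
          simp [Fin.castSucc_inj]
      · intro i
        refine Fin.lastCases ?_ (fun i => ?_) i
        · simp only [Fin.snoc_last]
          rw [if_neg (by rintro ⟨_, h⟩; rw [Fin.val_last] at h; omega)]
          exact hQu
        · simp only [Fin.snoc_castSucc, Fin.coe_castSucc]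
          exact hQe i
      · intro i
        refine Fin.lastCases ?_ (fun i => ?_) i
        · simp only [Fin.snoc_last]
          rw [if_neg (by rintro ⟨_, h⟩; rw [Fin.val_last] at h; omega)]
          exact hQw
        · simp only [Fin.snoc_castSucc, Fin.coe_castSucc]
          exact hQf i

end Induction

/-! ### Concrete part -/

-- paste original definitions here when merging (Fq, V, B, Sp, etc.)

section Concrete
variable {f m : ℕ}

/-- `B` as a bilinear map. -/
noncomputable def BV (f m : ℕ) : V f m →ₗ[Fq f] V f m →ₗ[Fq f] Fq f :=
  LinearMap.mk₂ (Fq f) (fun u w => B u w)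
    (fun u u' w => by
      simp only [B, Prod.fst_add, Prod.snd_add, Pi.add_apply]
      rw [← Finset.sum_add_distrib]
      exact Finset.sum_congr rfl fun i _ => by ring)
    (fun c u w => by
      simp only [B, Prod.smul_fst, Prod.smul_snd, Pi.smul_apply, smul_eq_mul]
      rw [Finset.mul_sum]
      exact Finset.sum_congr rfl fun i _ => by ring)
    (fun u w w' => by
      simp only [B, Prod.fst_add, Prod.snd_add, Pi.add_apply]
      rw [← Finset.sum_add_distrib]
      exact Finset.sum_congr rfl fun i _ => by ring)
    (fun c u w => by
      simp only [B, Prod.smul_fst, Prod.smul_snd, Pi.smul_apply, smul_eq_mul]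
      rw [Finset.mul_sum]
      exact Finset.sum_congr rfl fun i _ => by ring)

@[simp] lemma BV_apply (u w : V f m) : BV f m u w = B u w := rfl

lemma BV_alt : ∀ v : V f m, BV f m v v = 0 := by
  intro v
  rw [BV_apply]
  unfold B
  apply Finset.sum_eq_zero
  intro i _
  rw [mul_comm]
  exact CharTwo.add_self_eq_zero _

lemma BV_nondeg : ∀ v : V f m, (∀ w, BV f m v w = 0) → v = 0 := by
  intro v h
  have h1 : ∀ j, v.1 j = 0 := by
    intro j
    have := h (0, Pi.single j 1)
    rw [BV_apply] at this
    unfold B at this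
    simpa [Pi.single_apply, mul_ite] using this
  have h2 : ∀ j, v.2 j = 0 := by
    intro j
    have := h (Pi.single j 1, 0)
    rw [BV_apply] at this
    unfold B at this
    simpa [Pi.single_apply, mul_ite] using this
  ext j
  · exact h1 j
  · exact h2 j

lemma V_finrank : Module.finrank (Fq f) (V f m) = 2 * m := by
  simp only [V]
  rw [Module.finrank_prod]
  simp [Module.finrank_pi]
  ring

lemma Qplus_polar (u w : V f m) : Qplus (u + w) = Qplus u + Qplus w + B u w := by
  simp only [Qplus, B, Prod.fst_add, Prod.snd_add, Pi.add_apply]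
  rw [← Finset.sum_add_distrib, ← Finset.sum_add_distrib]
  exact Finset.sum_congr rfl fun i _ => by ring

lemma Qplus_smul (c : Fq f) (v : V f m) : Qplus (c • v) = c ^ 2 * Qplus v := by
  simp only [Qplus, Prod.smul_fst, Prod.smul_snd, Pi.smul_apply, smul_eq_mul]
  rw [Finset.mul_sum]
  exact Finset.sum_congr rfl fun i _ => by ring

lemma sp_smul_def (g : Sp f m) (v : V f m) :
    g • v = ((g : (V f m →ₗ[Fq f] V f m)ˣ) : V f m →ₗ[Fq f] V f m) v := rfl

/-- Step 1: every symplectic transformation preserves some quadratic form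
with polar form `B`. -/
theorem exists_invariant_form (g : Sp f m) :
    ∃ Q : V f m → Fq f,
      (∀ u w, Q (u + w) = Q u + Q w + B u w) ∧
      (∀ (c : Fq f) v, Q (c • v) = c ^ 2 * Q v) ∧
      (∀ v, Q (g • v) = Q v) := by
  classical
  have h2 : (2 : Fq f) = 0 := CharTwo.two_eq_zero
  obtain ⟨gl, hgl⟩ : ∃ gl : V f m →ₗ[Fq f] V f m,
      gl = ((g : (V f m →ₗ[Fq f] V f m)ˣ) : V f m →ₗ[Fq f] V f m) := ⟨_, rfl⟩
  have hg : ∀ u w, B (gl u) (gl w) = B u w := by rw [hgl]; exact g.2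
  obtain ⟨c, hc⟩ : ∃ c : V f m → Fq f, c = fun v => Qplus (gl v) + Qplus v := ⟨_, rfl⟩
  have c_apply : ∀ v, c v = Qplus (gl v) + Qplus v := by intro v; rw [hc]
  have hcadd : ∀ u w, c (u + w) = c u + c w := by
    intro u w
    rw [c_apply, c_apply, c_apply, map_add, Qplus_polar, Qplus_polar, hg]
    linear_combination (B u w) * h2
  have hcsm : ∀ (t : Fq f) v, c (t • v) = t ^ 2 * c v := by
    intro t v
    rw [c_apply, c_apply, map_smul, Qplus_smul, Qplus_smul]
    ring
  have hsqadd : ∀ x y : Fq f, mySqrt (x + y) = mySqrt x + mySqrt y := by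
    intro x y; simp [mySqrt, map_add]
  have hsq0 : mySqrt (0 : Fq f) = 0 := by simp [mySqrt]
  have hsqsq : ∀ x : Fq f, mySqrt (x ^ 2) = x := by
    intro x
    have h1 : (mySqrt (x ^ 2))^2 = x ^ 2 := mySqrt_sq _
    have hh : (mySqrt (x^2) + x)^2 = 0 := by
      rw [CharTwo.add_sq, h1, CharTwo.add_self_eq_zero]
    have h3 := pow_eq_zero_iff (n := 2) (by norm_num) |>.mp hh
    exact char2_eq_of_add_eq_zero h3
  obtain ⟨lc, lc_apply⟩ : ∃ lc : V f m →ₗ[Fq f] Fq f, ∀ v, lc v = mySqrt (c v) :=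
    ⟨{ toFun := fun v => mySqrt (c v)
       map_add' := fun u w => by
         show mySqrt (c (u + w)) = mySqrt (c u) + mySqrt (c w)
         rw [hcadd, hsqadd]
       map_smul' := fun t v => by
         show mySqrt (c (t • v)) = t * mySqrt (c v)
         rw [hcsm]
         have hx : (t : Fq f) ^ 2 * c v = (t * mySqrt (c v))^2 := by
           rw [mul_pow, mySqrt_sq]
         rw [hx, hsqsq] }, fun _ => rfl⟩
  have hlcsq : ∀ v, (lc v) ^ 2 = c v := by
    intro v; rw [lc_apply]; exact mySqrt_sq _
  obtain ⟨T, hT⟩ : ∃ T : V f m →ₗ[Fq f] V f m, T = gl - LinearMap.id := ⟨_, rfl⟩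
  have hmemrange : lc ∈ LinearMap.range T.dualMap := by
    rw [LinearMap.range_dualMap_eq_dualAnnihilator_ker, Submodule.mem_dualAnnihilator]
    intro v hv
    rw [LinearMap.mem_ker, hT, LinearMap.sub_apply, LinearMap.id_apply,
      sub_eq_zero] at hv
    have hcv : c v = 0 := by
      rw [c_apply, hv, CharTwo.add_self_eq_zero]
    rw [lc_apply, hcv, hsq0]
  obtain ⟨t, ht⟩ := hmemrange
  have htv : ∀ v, t (gl v) = t v + lc v := by
    intro v
    have h0 : (T.dualMap t) v = lc v := by rw [ht]
    rw [LinearMap.dualMap_apply, hT, LinearMap.sub_apply, LinearMap.id_apply,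
      map_sub, CharTwo.sub_eq_add] at h0
    linear_combination h0 - t v * h2
  refine ⟨fun v => Qplus v + (t v) ^ 2, ?_, ?_, ?_⟩
  · intro u w
    show Qplus (u + w) + t (u + w) ^ 2
      = (Qplus u + t u ^ 2) + (Qplus w + t w ^ 2) + B u w
    rw [Qplus_polar, map_add, CharTwo.add_sq]
    ring
  · intro cc v
    show Qplus (cc • v) + t (cc • v) ^ 2 = cc ^ 2 * (Qplus v + t v ^ 2)
    rw [Qplus_smul, map_smul, smul_eq_mul, mul_pow]
    ring
  · intro v
    have hQgl : Qplus (gl v) = Qplus v + c v := by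
      rw [c_apply]
      linear_combination - Qplus v * h2
    rw [sp_smul_def, ← hgl]
    show Qplus (gl v) + t (gl v) ^ 2 = Qplus v + t v ^ 2
    rw [htv, CharTwo.add_sq, hQgl, hlcsq]
    linear_combination c v * h2

end Concrete

section QSum
variable {F : Type*} [Field F] {W : Type*} [AddCommGroup W] [Module F W]

lemma q_sum (Bl : W →ₗ[F] W →ₗ[F] F) (Q : W → F)
    (hpol : ∀ u w, Q (u + w) = Q u + Q w + Bl u w)
    (hsc : ∀ (c : F) v, Q (c • v) = c ^ 2 * Q v)
    {k : ℕ} (v : Fin k → W) (s : Finset (Fin k))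
    (horth : ∀ i ∈ s, ∀ j ∈ s, i ≠ j → Bl (v i) (v j) = 0) :
    Q (∑ i ∈ s, v i) = ∑ i ∈ s, Q (v i) := by
  classical
  induction s using Finset.cons_induction with
  | empty =>
    have hq0 : Q 0 = 0 := by have := hsc 0 0; simpa using this
    simpa using hq0
  | cons a s ha ih =>
    rw [Finset.sum_cons, Finset.sum_cons, hpol]
    have hB : Bl (v a) (∑ i ∈ s, v i) = 0 := by
      rw [map_sum]
      apply Finset.sum_eq_zero
      intro j hj
      exact horth a (Finset.mem_cons_self a s) j (Finset.mem_cons_of_mem hj)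
        (fun h => ha (h ▸ hj))
    rw [hB, add_zero, ih]
    intro i hi j hj hij
    exact horth i (Finset.mem_cons_of_mem hi) j (Finset.mem_cons_of_mem hj) hij

end QSum

section Assembly
variable {f m : ℕ}

/-- The linear map sending the standard symplectic basis to the given vectors. -/
noncomputable def mkMap (e fv : Fin m → V f m) : V f m →ₗ[Fq f] V f m where
  toFun p := (∑ i, p.1 i • e i) + (∑ i, p.2 i • fv i)
  map_add' p q := by
    simp only [Prod.fst_add, Prod.snd_add, Pi.add_apply, add_smul]
    rw [Finset.sum_add_distrib, Finset.sum_add_distrib]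
    abel
  map_smul' c p := by
    simp only [Prod.smul_fst, Prod.smul_snd, Pi.smul_apply, smul_eq_mul, RingHom.id_apply]
    rw [smul_add, Finset.smul_sum, Finset.smul_sum]
    simp [smul_smul]

lemma mkMap_apply (e fv : Fin m → V f m) (p : V f m) :
    mkMap e fv p = (∑ i, p.1 i • e i) + (∑ i, p.2 i • fv i) := rfl

lemma mkMap_B (e fv : Fin m → V f m)
    (hee : ∀ i j, B (e i) (e j) = 0) (hff : ∀ i j, B (fv i) (fv j) = 0)
    (hef : ∀ i j, B (e i) (fv j) = if i = j then 1 else 0)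
    (hfe : ∀ i j, B (fv i) (e j) = if i = j then 1 else 0)
    (p q : V f m) : B (mkMap e fv p) (mkMap e fv q) = B p q := by
  classical
  rw [← BV_apply, mkMap_apply, mkMap_apply]
  simp only [map_add, map_sum, map_smul, LinearMap.add_apply, LinearMap.sum_apply,
    LinearMap.smul_apply, smul_eq_mul, BV_apply, hee, hff, hef, hfe,
    mul_ite, mul_one, mul_zero, Finset.sum_ite_eq, Finset.sum_ite_eq',
    Finset.sum_const_zero, add_zero, zero_add, Finset.mem_univ, if_true,
    Finset.mul_sum]
  unfold B
  rw [Finset.sum_add_distrib]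
  have h1 : ∀ (A C : Fin m → Fq f), ∑ x, A x * C x = ∑ x, C x * A x :=
    fun A C => Finset.sum_congr rfl fun i _ => mul_comm _ _
  rw [h1 (q.1) (p.2), h1 (q.2) (p.1), add_comm]

lemma mkMap_Q (Q' : V f m → Fq f)
    (hpol : ∀ u w, Q' (u + w) = Q' u + Q' w + B u w)
    (hsc : ∀ (c : Fq f) v, Q' (c • v) = c ^ 2 * Q' v)
    (e fv : Fin m → V f m)
    (hee : ∀ i j, B (e i) (e j) = 0) (hff : ∀ i j, B (fv i) (fv j) = 0)
    (hef : ∀ i j, B (e i) (fv j) = if i = j then 1 else 0)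
    (p : V f m) :
    Q' (mkMap e fv p) = (∑ i, (p.1 i) ^ 2 * Q' (e i)) + (∑ i, (p.2 i) ^ 2 * Q' (fv i))
      + ∑ i, p.1 i * p.2 i := by
  classical
  have hpol' : ∀ u w, Q' (u + w) = Q' u + Q' w + BV f m u w := hpol
  rw [mkMap_apply, hpol]
  have hQA : Q' (∑ i, p.1 i • e i) = ∑ i, (p.1 i) ^ 2 * Q' (e i) := by
    rw [q_sum (BV f m) Q' hpol' hsc _ _ (fun i _ j _ hij => by
      simp only [map_smul, LinearMap.smul_apply, BV_apply, smul_eq_mul, hee i j,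
        mul_zero])]
    exact Finset.sum_congr rfl fun i _ => hsc _ _
  have hQY : Q' (∑ i, p.2 i • fv i) = ∑ i, (p.2 i) ^ 2 * Q' (fv i) := by
    rw [q_sum (BV f m) Q' hpol' hsc _ _ (fun i _ j _ hij => by
      simp only [map_smul, LinearMap.smul_apply, BV_apply, smul_eq_mul, hff i j,
        mul_zero])]
    exact Finset.sum_congr rfl fun i _ => hsc _ _
  have hBAY : B (∑ i, p.1 i • e i) (∑ i, p.2 i • fv i) = ∑ i, p.1 i * p.2 i := by
    rw [← BV_apply]
    simp only [map_sum, map_smul, LinearMap.sum_apply, LinearMap.smul_apply,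
      smul_eq_mul, BV_apply, hef, mul_ite, mul_one, mul_zero,
      Finset.sum_ite_eq, Finset.sum_ite_eq', Finset.mem_univ, if_true, Finset.mul_sum]
    exact Finset.sum_congr rfl fun i _ => mul_comm _ _
  rw [hQA, hQY, hBAY]

end Assembly


/-- Every element of `Sp_{2m}(2^f)` is conjugate to an element of `O⁺_{2m}(2^f)` or of
`O⁻_{2m}(2^f)`. -/
theorem conjugate_mem_orthogonal_plus_or_minus
    (f m : ℕ) (hf : 1 ≤ f) (hm : 0 < m) (a : Fq f)
    (ha : ∀ α : Fq f, α ^ 2 + α ≠ a) (g : Sp f m) :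
    ∃ h : Sp f m, h * g * h⁻¹ ∈ Oplus f m ∨ h * g * h⁻¹ ∈ Ominus f m hm a := by
  classical
  obtain ⟨Q', hpol, hsc, hinvar⟩ := exists_invariant_form g
  obtain ⟨e, fv, ε, hee, hff, hef, hQe, hQf⟩ :=
    adapted_basis (F := Fq f) a ha m (V f m) inferInstance inferInstance inferInstance
      (BV f m) BV_alt BV_nondeg V_finrank Q' hpol hsc
  have hee' : ∀ i j, B (e i) (e j) = 0 := hee
  have hff' : ∀ i j, B (fv i) (fv j) = 0 := hff
  have hef' : ∀ i j, B (e i) (fv j) = if i = j then 1 else 0 := hef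
  have hfe' : ∀ i j, B (fv i) (e j) = if i = j then 1 else 0 := by
    intro i j
    have hsym : B (fv i) (e j) = B (e j) (fv i) := by
      rw [← BV_apply, ← BV_apply (e j), bl_symm (BV f m) BV_alt]
    rw [hsym, hef' j i]
    simp [eq_comm]
  have hsymp : ∀ p q, B (mkMap e fv p) (mkMap e fv q) = B p q :=
    mkMap_B e fv hee' hff' hef' hfe'
  have hinj : Function.Injective (mkMap e fv) := by
    intro p q hpq
    have hz : ∀ r, BV f m (p - q) r = 0 := by
      intro r
      rw [map_sub, LinearMap.sub_apply, BV_apply, BV_apply, ← hsymp p r, ← hsymp q r,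
        hpq, sub_self]
    exact sub_eq_zero.mp (BV_nondeg _ hz)
  have hsurj : Function.Surjective (mkMap e fv) :=
    (LinearMap.injective_iff_surjective).mp hinj
  let E := LinearEquiv.ofBijective (mkMap e fv) ⟨hinj, hsurj⟩
  have hEapp : ∀ p, E p = mkMap e fv p := fun p => rfl
  have hcomp1 : mkMap e fv * (E.symm : V f m →ₗ[Fq f] V f m) = 1 := by
    apply LinearMap.ext; intro v
    show mkMap e fv (E.symm v) = v
    have h := E.apply_symm_apply v
    rwa [hEapp] at h
  have hcomp2 : (E.symm : V f m →ₗ[Fq f] V f m) * mkMap e fv = 1 := by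
    apply LinearMap.ext; intro v
    show E.symm (mkMap e fv v) = v
    have h := E.symm_apply_apply v
    rwa [hEapp] at h
  let hU : (V f m →ₗ[Fq f] V f m)ˣ :=
    ⟨mkMap e fv, (E.symm : V f m →ₗ[Fq f] V f m), hcomp1, hcomp2⟩
  have hUmem : hU ∈ Sp f m := fun u w => hsymp u w
  let hS : Sp f m := ⟨hU, hUmem⟩
  -- the conjugation formula
  have hconj : ∀ v, ((hS⁻¹ * g * hS : Sp f m) • v)
      = E.symm (((g : (V f m →ₗ[Fq f] V f m)ˣ) : V f m →ₗ[Fq f] V f m) (mkMap e fv v)) :=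
    fun v => rfl
  refine ⟨hS⁻¹, ?_⟩
  have hmain : ∀ (Qpat : V f m → Fq f), (∀ w, Qpat w = Q' (mkMap e fv w)) →
      ∀ v, Qpat ((hS⁻¹ * g * hS : Sp f m) • v) = Qpat v := by
    intro Qpat hkey v
    rw [hconj, hkey, hkey]
    have hms : mkMap e fv (E.symm (((g : (V f m →ₗ[Fq f] V f m)ˣ) : V f m →ₗ[Fq f] V f m)
        (mkMap e fv v))) = ((g : (V f m →ₗ[Fq f] V f m)ˣ) : V f m →ₗ[Fq f] V f m)
        (mkMap e fv v) := by
      have h := E.apply_symm_apply (((g : (V f m →ₗ[Fq f] V f m)ˣ) : V f m →ₗ[Fq f] V f m)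
        (mkMap e fv v))
      rwa [hEapp] at h
    rw [hms]
    exact hinvar (mkMap e fv v)
  cases ε with
  | false =>
    left
    rw [show (hS⁻¹ * g * hS⁻¹⁻¹ : Sp f m) = hS⁻¹ * g * hS by rw [inv_inv]]
    intro v
    refine hmain Qplus ?_ v
    intro w
    rw [mkMap_Q Q' hpol hsc e fv hee' hff' hef' w]
    have he0 : ∀ i, Q' (e i) = 0 := by intro i; rw [hQe i]; simp
    have hf0 : ∀ i, Q' (fv i) = 0 := by intro i; rw [hQf i]; simp
    simp only [he0, hf0, mul_zero, Finset.sum_const_zero, zero_add]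
    rfl
  | true =>
    right
    rw [show (hS⁻¹ * g * hS⁻¹⁻¹ : Sp f m) = hS⁻¹ * g * hS by rw [inv_inv]]
    intro v
    refine hmain (Qminus hm a) ?_ v
    intro w
    rw [mkMap_Q Q' hpol hsc e fv hee' hff' hef' w]
    have hidx : ∀ i : Fin m, ((i : ℕ) = 0) ↔ (i = ⟨0, hm⟩) :=
      fun i => ⟨fun h => Fin.ext h, fun h => by rw [h]⟩
    have he0 : ∀ i, Q' (e i) = if i = ⟨0, hm⟩ then 1 else 0 := by
      intro i; rw [hQe i]; simp [hidx i]
    have hf0 : ∀ i, Q' (fv i) = if i = ⟨0, hm⟩ then a else 0 := by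
      intro i; rw [hQf i]; simp [hidx i]
    simp only [he0, hf0, mul_ite, mul_one, mul_zero,
      Finset.sum_ite_eq', Finset.mem_univ, if_true]
    unfold Qminus
    ring
end

section
/- Assume m ≥ 2. Let v ∈ V with v ≠ 0 and let G_v = {g ∈ G : g v = v} be its stabilizer in G = Sp(V). Then two nonzero vectors u, u' ∈ V lie in the same G_v-orbit if and only if all of the following hold: B(v,u) = B(v,u'); u lies in the line F·v if and only if u' does; and if u ∈ F·v then u = u'. (In particular the G_v-orbits on V∖{0} are: the q−1 singletons {λv} for λ ∈ F∖{0}, the set v^⊥∖(F·v), and the q−1 sets {u : B(v,u) = λ} for λ ∈ F∖{0}.) -/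
set_option synthInstance.maxHeartbeats 1000000
set_option maxHeartbeats 1000000

open scoped BigOperators

section AuxLemmas

variable {f m : ℕ}

lemma char2 (a : Fq f) : a + a = 0 := by
  have : (2 : Fq f) = 0 := by
    haveI : CharP (Fq f) 2 := inferInstance
    exact CharP.cast_eq_zero (Fq f) 2
  calc a + a = 2 * a := by ring
    _ = 0 := by rw [this]; ring

lemma B_symm (x y : V f m) : B x y = B y x := by
  simp only [B]; apply Finset.sum_congr rfl; intros; ring

lemma B_self (x : V f m) : B x x = 0 := by
  simp only [B]
  apply Finset.sum_eq_zero; intro i _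
  rw [mul_comm]; exact char2 _

lemma B_add_left (x y w : V f m) : B (x + y) w = B x w + B y w := by
  simp only [B, Prod.fst_add, Prod.snd_add, Pi.add_apply, ← Finset.sum_add_distrib]
  apply Finset.sum_congr rfl; intros; ring

lemma B_add_right (x y w : V f m) : B x (y + w) = B x y + B x w := by
  simp only [B, Prod.fst_add, Prod.snd_add, Pi.add_apply, ← Finset.sum_add_distrib]
  apply Finset.sum_congr rfl; intros; ring

lemma B_smul_left (a : Fq f) (x w : V f m) : B (a • x) w = a * B x w := by
  simp only [B, Prod.smul_fst, Prod.smul_snd, Pi.smul_apply, smul_eq_mul, Finset.mul_sum]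
  apply Finset.sum_congr rfl; intros; ring

lemma B_smul_right (a : Fq f) (x w : V f m) : B x (a • w) = a * B x w := by
  simp only [B, Prod.smul_fst, Prod.smul_snd, Pi.smul_apply, smul_eq_mul, Finset.mul_sum]
  apply Finset.sum_congr rfl; intros; ring

end AuxLemmas

section Aux2
variable {f m : ℕ}

lemma B_nondeg {x : V f m} (h : ∀ w, B x w = 0) : x = 0 := by
  have h1 : ∀ j, x.1 j = 0 := by
    intro j
    have := h (0, Pi.single j 1)
    simpa [B, Pi.single_apply, Finset.sum_ite_eq', mul_comm] using this
  have h2 : ∀ j, x.2 j = 0 := by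
    intro j
    have := h (Pi.single j 1, 0)
    simpa [B, Pi.single_apply, Finset.sum_ite_eq', mul_comm] using this
  ext j
  · exact h1 j
  · exact h2 j

/-- If `u` is not a multiple of `v`, there is `w ∈ v^⊥` with `B u w ≠ 0`. -/
lemma exists_perp_ne_zero {v u : V f m} (hv : v ≠ 0)
    (hu : u ∉ Submodule.span (Fq f) {v}) :
    ∃ w : V f m, B v w = 0 ∧ B u w ≠ 0 := by
  by_contra hcon
  push_neg at hcon
  -- then ker (B v ·) ⊆ ker (B u ·), so u = c • v
  obtain ⟨w0, hw0⟩ : ∃ w0, B v w0 ≠ 0 := by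
    by_contra h; push_neg at h; exact hv (B_nondeg h)
  set c : Fq f := B u w0 / B v w0 with hc
  apply hu
  rw [Submodule.mem_span_singleton]
  refine ⟨c, ?_⟩
  have key : ∀ w, B (c • v + u) w = 0 := by
    intro w
    set t : Fq f := B v w / B v w0 with ht
    have hvw' : B v (w + t • w0) = 0 := by
      rw [B_add_right, B_smul_right, ht, div_mul_cancel₀ _ hw0]
      exact char2 _
    have huw' : B u (w + t • w0) = 0 := hcon _ hvw'
    rw [B_add_right, B_smul_right] at huw'
    -- B u w = t * B u w0
    have h1 : B u w = t * B u w0 := by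
      have := huw'
      linear_combination this - char2 (t * B u w0)
    rw [B_add_left, B_smul_left, h1, hc, ht]
    field_simp
    ring_nf
    have h2 : (2 : Fq f) = 0 := by
      have := char2 (1 : Fq f); linear_combination this
    rw [h2]; ring
  have hkey := B_nondeg key
  have hneg : -(c • v) = u := neg_eq_of_add_eq_zero_right hkey
  have hc2 : -c = c := neg_eq_of_add_eq_zero_right (char2 c)
  rw [← hneg, ← neg_smul, hc2]

end Aux2

section Transvection
variable {f m : ℕ}

lemma two_eq_zero : (2 : Fq f) = 0 := by
  have := char2 (1 : Fq f); linear_combination this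

lemma vchar2 (x : V f m) : x + x = 0 := by
  have : x + x = (2 : Fq f) • x := by
    rw [two_smul]
  rw [this, two_eq_zero, zero_smul]

/-- The symplectic transvection `x ↦ x + c·B(x,w)·w`. -/
noncomputable def Tmap (w : V f m) (c : Fq f) : V f m →ₗ[Fq f] V f m where
  toFun x := x + (c * B x w) • w
  map_add' x y := by
    show (x + y) + (c * B (x + y) w) • w = (x + (c * B x w) • w) + (y + (c * B y w) • w)
    rw [B_add_left, mul_add, add_smul]
    abel
  map_smul' a x := by
    show (a • x) + (c * B (a • x) w) • w = a • (x + (c * B x w) • w)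
    rw [B_smul_left, smul_add, smul_smul]
    congr 2
    ring

lemma Tmap_apply (w : V f m) (c : Fq f) (x : V f m) :
    Tmap w c x = x + (c * B x w) • w := rfl

lemma Tmap_Tmap (w : V f m) (c : Fq f) (x : V f m) :
    Tmap w c (Tmap w c x) = x := by
  simp only [Tmap_apply, B_add_left, B_smul_left, B_self, mul_zero, add_zero]
  rw [add_assoc, vchar2, add_zero]

noncomputable def Tunit (w : V f m) (c : Fq f) : (V f m →ₗ[Fq f] V f m)ˣ where
  val := Tmap w c
  inv := Tmap w c
  val_inv := LinearMap.ext fun x => Tmap_Tmap w c x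
  inv_val := LinearMap.ext fun x => Tmap_Tmap w c x

lemma Tunit_mem_Sp (w : V f m) (c : Fq f) : Tunit w c ∈ Sp f m := by
  intro x y
  show B (Tmap w c x) (Tmap w c y) = B x y
  simp only [Tmap_apply, B_add_left, B_add_right, B_smul_left, B_smul_right, B_self,
    mul_zero, zero_mul, add_zero, zero_add]
  rw [B_symm w y]
  ring_nf
  rw [two_eq_zero]
  ring

noncomputable def TSp (w : V f m) (c : Fq f) : Sp f m := ⟨Tunit w c, Tunit_mem_Sp w c⟩

lemma TSp_smul (w : V f m) (c : Fq f) (x : V f m) :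
    TSp w c • x = x + (c * B x w) • w := rfl

lemma TSp_fix {v w : V f m} (c : Fq f) (h : B v w = 0) : TSp w c • v = v := by
  rw [TSp_smul, h, mul_zero, zero_smul, add_zero]

lemma TSp_map (a b : V f m) (h : B a b ≠ 0) : TSp (a + b) (B a b)⁻¹ • a = b := by
  rw [TSp_smul, B_add_right, B_self, zero_add, inv_mul_cancel₀ h, one_smul,
    ← add_assoc, vchar2, zero_add]

end Transvection

section MainAux
variable {f m : ℕ}

lemma sp_smul (g : Sp f m) (x : V f m) :
    g • x = ((g : (V f m →ₗ[Fq f] V f m)ˣ) : V f m →ₗ[Fq f] V f m) x := rfl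

lemma sp_smul_smul (g : Sp f m) (a : Fq f) (x : V f m) : g • (a • x) = a • (g • x) := by
  rw [sp_smul, sp_smul, map_smul]

lemma sp_B (g : Sp f m) (x y : V f m) : B (g • x) (g • y) = B x y := g.2 x y

end MainAux

/-- Orbit criterion for the stabilizer `G_v` of a nonzero vector `v` in `Sp_{2m}(2^f)` (`m ≥ 2`):
two nonzero vectors `u, u'` lie in the same `G_v`-orbit if and only if `B v u = B v u'`,
`u` lies on the line `F·v` iff `u'` does, and if `u ∈ F·v` then `u = u'`. -/
theorem stabilizer_orbit_criterion
    (f m : ℕ) (hf : 1 ≤ f) (hm : 2 ≤ m)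
    (v : V f m) (hv : v ≠ 0) (u u' : V f m) (hu : u ≠ 0) (hu' : u' ≠ 0) :
    (∃ g : Sp f m, g • v = v ∧ g • u = u') ↔
      (B v u = B v u' ∧
        (u ∈ Submodule.span (Fq f) {v} ↔ u' ∈ Submodule.span (Fq f) {v}) ∧
        (u ∈ Submodule.span (Fq f) {v} → u = u')) := by
  constructor
  · rintro ⟨g, hgv, hgu⟩
    have hginv : g⁻¹ • v = v := by
      calc g⁻¹ • v = g⁻¹ • (g • v) := by rw [hgv]
        _ = v := inv_smul_smul g v
    refine ⟨?_, ⟨?_, ?_⟩, ?_⟩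
    · conv_rhs => rw [← hgv, ← hgu]
      rw [sp_B]
    · intro h
      obtain ⟨a, ha⟩ := Submodule.mem_span_singleton.mp h
      rw [← hgu, ← ha, sp_smul_smul, hgv]
      exact Submodule.smul_mem _ _ (Submodule.mem_span_singleton_self v)
    · intro h
      obtain ⟨a, ha⟩ := Submodule.mem_span_singleton.mp h
      have : u = a • v := by
        rw [← inv_smul_smul g u, hgu, ← ha, sp_smul_smul, hginv]
      rw [this]
      exact Submodule.smul_mem _ _ (Submodule.mem_span_singleton_self v)
    · intro h
      obtain ⟨a, ha⟩ := Submodule.mem_span_singleton.mp h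
      rw [← ha, ← hgu, ← ha, sp_smul_smul, hgv]
  · rintro ⟨hB, hspan, heq⟩
    by_cases hus : u ∈ Submodule.span (Fq f) {v}
    · exact ⟨1, one_smul _ _, by rw [one_smul, heq hus]⟩
    · have hus' : u' ∉ Submodule.span (Fq f) {v} := fun h => hus (hspan.mpr h)
      by_cases hee : u = u'
      · exact ⟨1, one_smul _ _, by rw [one_smul, hee]⟩
      by_cases hBu : B u u' = 0
      · -- need intermediate vector
        obtain ⟨w1, hw1v, hw1u⟩ := exists_perp_ne_zero hv hus
        obtain ⟨w2, hw2v, hw2u'⟩ := exists_perp_ne_zero hv hus'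
        obtain ⟨w, hwv, hwu, hwu'⟩ : ∃ w, B v w = 0 ∧ B u w ≠ 0 ∧ B u' w ≠ 0 := by
          by_cases h1 : B u' w1 = 0
          · by_cases h2 : B u w2 = 0
            · refine ⟨w1 + w2, ?_, ?_, ?_⟩
              · rw [B_add_right, hw1v, hw2v, add_zero]
              · rw [B_add_right, h2, add_zero]; exact hw1u
              · rw [B_add_right, h1, zero_add]; exact hw2u'
            · exact ⟨w2, hw2v, h2, hw2u'⟩
          · exact ⟨w1, hw1v, hw1u, h1⟩
        set u'' := u + w with hu''
        have hvu'' : B v u'' = B v u := by rw [hu'', B_add_right, hwv, add_zero]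
        have huu'' : B u u'' ≠ 0 := by
          rw [hu'', B_add_right, B_self, zero_add]; exact hwu
        have hu''u' : B u'' u' ≠ 0 := by
          rw [hu'', B_add_left, hBu, zero_add, B_symm]; exact hwu'
        refine ⟨TSp (u'' + u') (B u'' u')⁻¹ * TSp (u + u'') (B u u'')⁻¹, ?_, ?_⟩
        · have fix1 : TSp (u + u'') (B u u'')⁻¹ • v = v :=
            TSp_fix _ (by rw [B_add_right, hvu'', char2])
          have fix2 : TSp (u'' + u') (B u'' u')⁻¹ • v = v :=
            TSp_fix _ (by rw [B_add_right, hvu'', hB, char2])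
          rw [mul_smul, fix1, fix2]
        · rw [mul_smul, TSp_map u u'' huu'', TSp_map u'' u' hu''u']
      · refine ⟨TSp (u + u') (B u u')⁻¹, ?_, TSp_map u u' hBu⟩
        rw [TSp_fix]
        rw [B_add_right, hB, char2]
end

section
/- Assume m ≥ 2. For each ε ∈ {+, −}, the subgroup O^ε has exactly q/2 + 1 orbits on the coset space Ω^ε = G/O^ε (equivalently, the permutation character π^ε of G on Ω^ε satisfies ⟨π^ε, π^ε⟩ = q/2 + 1). -/
set_option synthInstance.maxHeartbeats 1000000
set_option maxHeartbeats 1000000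

open scoped BigOperators

/-! ### Auxiliary development -/

noncomputable section AuxDev

open Finset

attribute [local instance] Classical.propDecidable

noncomputable instance instFqFintype (f : ℕ) : Fintype (Fq f) := Fintype.ofFinite _

namespace AuxDev

variable {f m : ℕ}

lemma F2 (x : Fq f) : x + x = 0 := CharTwo.add_self_eq_zero x

lemma Fadd_eq_zero {x y : Fq f} (h : x + y = 0) : x = y := by
  have := congrArg (· + y) h
  simpa [add_assoc, F2] using this

lemma Fsq_add (x y : Fq f) : (x + y)^2 = x^2 + y^2 := CharTwo.add_sq x y

lemma Fsq_inj : Function.Injective (fun x : Fq f => x^2) := by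
  intro x y h
  simp only at h
  have h2 : (x + y)^2 = 0 := by rw [Fsq_add, h, F2]
  have h3 : x + y = 0 := by
    exact pow_eq_zero_iff (two_ne_zero) |>.mp h2
  exact Fadd_eq_zero h3

lemma Fsq_surj : Function.Surjective (fun x : Fq f => x^2) :=
  Finite.injective_iff_surjective.mp Fsq_inj

/-- square root in char 2 -/
def fsqrt (x : Fq f) : Fq f := (Fsq_surj x).choose

lemma fsqrt_sq (x : Fq f) : (fsqrt x)^2 = x := (Fsq_surj x).choose_spec

lemma V2 (v : V f m) : v + v = 0 := by
  ext i <;> exact F2 _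

/-! ### B lemmas -/

lemma B_add_left (u u' w : V f m) : B (u + u') w = B u w + B u' w := by
  simp only [B, ← Finset.sum_add_distrib]
  exact Finset.sum_congr rfl fun i _ => by
    simp only [Prod.fst_add, Prod.snd_add, Pi.add_apply]; ring

lemma B_add_right (u w w' : V f m) : B u (w + w') = B u w + B u w' := by
  simp only [B, ← Finset.sum_add_distrib]
  exact Finset.sum_congr rfl fun i _ => by
    simp only [Prod.fst_add, Prod.snd_add, Pi.add_apply]; ring

lemma B_smul_left (μ : Fq f) (u w : V f m) : B (μ • u) w = μ * B u w := by
  simp only [B, Finset.mul_sum]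
  exact Finset.sum_congr rfl fun i _ => by
    simp only [Prod.smul_fst, Prod.smul_snd, Pi.smul_apply, smul_eq_mul]; ring

lemma B_smul_right (μ : Fq f) (u w : V f m) : B u (μ • w) = μ * B u w := by
  simp only [B, Finset.mul_sum]
  exact Finset.sum_congr rfl fun i _ => by
    simp only [Prod.smul_fst, Prod.smul_snd, Pi.smul_apply, smul_eq_mul]; ring

lemma B_comm (u w : V f m) : B u w = B w u := by
  simp only [B]
  exact Finset.sum_congr rfl fun i _ => by ring

lemma B_self (u : V f m) : B u u = 0 := by
  simp only [B]
  rw [Finset.sum_eq_zero]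
  intro i _
  rw [mul_comm]; exact F2 _

lemma B_zero_left (w : V f m) : B 0 w = 0 := by simp [B]

lemma B_zero_right (u : V f m) : B u 0 = 0 := by simp [B]

/-- basis vectors -/
def ex (i : Fin m) : V f m := (Pi.single i 1, 0)
def ey (i : Fin m) : V f m := (0, Pi.single i 1)

lemma B_ex (v : V f m) (i : Fin m) : B v (ex i) = v.2 i := by
  simp [B, ex, Pi.single_apply, Finset.sum_ite_eq', mul_comm]

lemma B_ey (v : V f m) (i : Fin m) : B v (ey i) = v.1 i := by
  simp [B, ey, Pi.single_apply, Finset.sum_ite_eq', mul_comm]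

lemma B_nondeg {v : V f m} (h : ∀ w, B v w = 0) : v = 0 := by
  ext i
  · simpa [B_ey] using h (ey i)
  · simpa [B_ex] using h (ex i)

lemma B_ext {d d' : V f m} (h : ∀ v, B v d = B v d') : d = d' := by
  have : ∀ w, B (d + d') w = 0 := by
    intro w
    rw [B_add_left]
    rw [B_comm d w, B_comm d' w, h w]
    exact F2 _
  have h0 := B_nondeg this
  have := congrArg (· + d') h0
  simpa [add_assoc, V2] using this

lemma B_exists_one {v : V f m} (hv : v ≠ 0) : ∃ w, B v w = 1 := by
  by_contra h
  push_neg at h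
  apply hv
  apply B_nondeg
  intro w
  by_contra hw
  exact h ((B v w)⁻¹ • w) (by rw [B_smul_right, inv_mul_cancel₀ hw])

end AuxDev
namespace AuxDev
variable {f m : ℕ}

/-! ### Sp action lemmas -/

lemma sp_smul_def (g : Sp f m) (v : V f m) :
    g • v = ((g : (V f m →ₗ[Fq f] V f m)ˣ) : V f m →ₗ[Fq f] V f m) v := rfl

lemma sp_smul_add (g : Sp f m) (u w : V f m) : g • (u + w) = g • u + g • w := by
  simp [sp_smul_def, map_add]

lemma sp_smul_smul (g : Sp f m) (μ : Fq f) (v : V f m) : g • (μ • v) = μ • (g • v) := by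
  simp [sp_smul_def, map_smul]

lemma sp_smul_zero (g : Sp f m) : g • (0 : V f m) = 0 := by
  simp [sp_smul_def]

lemma sp_B (g : Sp f m) (u w : V f m) : B (g • u) (g • w) = B u w := g.2 u w

lemma sp_smul_ne_zero (g : Sp f m) {v : V f m} (hv : v ≠ 0) : g • v ≠ 0 := by
  intro h
  apply hv
  have := congrArg (g⁻¹ • ·) h
  simpa [inv_smul_smul, sp_smul_zero] using this

lemma sp_B_inv (g : Sp f m) (u w : V f m) : B (g⁻¹ • u) w = B u (g • w) := by
  rw [← sp_B g (g⁻¹ • u) w, smul_inv_smul]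

/-! ### Symplectic transvection-type maps -/

/-- the linear map `v ↦ v + κ (B v e) e` -/
noncomputable def Tlin (κ : Fq f) (e : V f m) : V f m →ₗ[Fq f] V f m where
  toFun v := v + (κ * B v e) • e
  map_add' u w := by
    show (u + w) + (κ * B (u + w) e) • e = (u + (κ * B u e) • e) + (w + (κ * B w e) • e)
    rw [B_add_left]
    module
  map_smul' μ v := by
    show μ • v + (κ * B (μ • v) e) • e = (RingHom.id (Fq f)) μ • (v + (κ * B v e) • e)
    rw [B_smul_left]
    simp only [RingHom.id_apply]
    module

lemma Tlin_apply (κ : Fq f) (e : V f m) (v : V f m) :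
    Tlin κ e v = v + (κ * B v e) • e := rfl

lemma Tlin_invol (κ : Fq f) (e : V f m) : (Tlin κ e) ∘ₗ (Tlin κ e) = LinearMap.id := by
  apply LinearMap.ext
  intro v
  simp only [LinearMap.comp_apply, Tlin_apply, LinearMap.id_apply, B_add_left, B_smul_left,
    B_self, mul_zero, add_zero]
  rw [add_assoc, ← add_smul, F2, zero_smul, add_zero]

/-- the symplectic transvection as an element of `Sp` -/
noncomputable def sympT (κ : Fq f) (e : V f m) : Sp f m :=
  ⟨⟨Tlin κ e, Tlin κ e, Tlin_invol κ e, Tlin_invol κ e⟩, by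
    intro u w
    show B (Tlin κ e u) (Tlin κ e w) = B u w
    simp only [Tlin_apply, B_add_left, B_add_right, B_smul_left, B_smul_right, B_self,
      B_comm e u, B_comm e w, mul_zero, add_zero]
    linear_combination F2 (κ * (B u e * B w e))⟩

lemma sympT_smul (κ : Fq f) (e : V f m) (v : V f m) :
    (sympT κ e) • v = v + (κ * B v e) • e := rfl

lemma sympT_inv (κ : Fq f) (e : V f m) : (sympT κ e)⁻¹ = sympT κ e := by
  have : (sympT κ e) * (sympT κ e) = 1 := by
    apply Subtype.ext
    apply Units.ext
    exact Tlin_invol κ e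
  exact (eq_inv_of_mul_eq_one_left this).symm

end AuxDev
namespace AuxDev
variable {f m : ℕ}

section QF
variable {Q : V f m → Fq f}
  (hp : ∀ u w : V f m, Q (u + w) = Q u + Q w + B u w)
  (hs : ∀ (μ : Fq f) (v : V f m), Q (μ • v) = μ^2 * Q v)

include hs in
lemma Q_zero : Q 0 = 0 := by
  have := hs 0 0
  simpa using this

include hp hs in
lemma Q_sympT (κ : Fq f) (e v : V f m) :
    Q ((sympT κ e) • v) = Q v + (κ^2 * Q e + κ) * (B v e)^2 := by
  rw [sympT_smul, hp, hs, B_smul_right]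
  ring

include hp hs in
lemma refl_mem {e : V f m} (he : Q e ≠ 0) : sympT (Q e)⁻¹ e ∈ Ogrp Q := by
  intro v
  rw [Q_sympT hp hs]
  have : ((Q e)⁻¹)^2 * Q e + (Q e)⁻¹ = 0 := by
    field_simp
    linear_combination F2 (1 : Fq f)
  rw [this, zero_mul, add_zero]

lemma repr_V (v : V f m) : ∑ i, (v.1 i • ex i + v.2 i • ey i) = v := by
  apply Prod.ext
  · rw [Prod.fst_sum]
    ext j
    simp [ex, ey, Pi.single_apply, Finset.sum_apply]
  · rw [Prod.snd_sum]
    ext j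
    simp [ex, ey, Pi.single_apply, Finset.sum_apply]

include hp hs in
lemma cocycle_exists (g : Sp f m) : ∃ d : V f m, ∀ v, Q (g⁻¹ • v) = Q v + (B v d)^2 := by
  set θ : V f m → Fq f := fun v => Q (g⁻¹ • v) + Q v with hθ
  have θadd : ∀ u w, θ (u + w) = θ u + θ w := by
    intro u w
    simp only [hθ, sp_smul_add, hp]
    rw [sp_B g⁻¹ u w]
    linear_combination F2 (B u w)
  have θsmul : ∀ (μ : Fq f) v, θ (μ • v) = μ^2 * θ v := by
    intro μ v
    simp only [hθ, sp_smul_smul, hs]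
    ring
  set φ : V f m → Fq f := fun v => fsqrt (θ v) with hφ
  have φsq : ∀ v, (φ v)^2 = θ v := fun v => fsqrt_sq _
  have φadd : ∀ u w, φ (u + w) = φ u + φ w := by
    intro u w
    apply Fsq_inj
    show (φ (u+w))^2 = (φ u + φ w)^2
    rw [Fsq_add, φsq, φsq, φsq, θadd]
  have φsmul : ∀ (μ : Fq f) v, φ (μ • v) = μ * φ v := by
    intro μ v
    apply Fsq_inj
    show (φ (μ • v))^2 = (μ * φ v)^2
    rw [φsq, θsmul, mul_pow, φsq]
  let φ' : V f m →+ Fq f := AddMonoidHom.mk' φ φadd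
  have φ'eq : ∀ v, φ' v = φ v := fun _ => rfl
  refine ⟨(fun i => φ (ey i), fun i => φ (ex i)), ?_⟩
  have key : ∀ v : V f m, B v (fun i => φ (ey i), fun i => φ (ex i)) = φ v := by
    intro v
    conv_rhs => rw [← repr_V v, ← φ'eq, map_sum]
    simp only [B]
    refine Finset.sum_congr rfl fun i _ => ?_
    rw [map_add, φ'eq, φ'eq, φsmul, φsmul]
  intro v
  rw [key v]
  have : (φ v)^2 = Q (g⁻¹ • v) + Q v := φsq v
  rw [this]
  linear_combination -F2 (Q v)

omit hs in
lemma cocycle_unique (g : Sp f m) {d d' : V f m}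
    (h : ∀ v, Q (g⁻¹ • v) = Q v + (B v d)^2) (h' : ∀ v, Q (g⁻¹ • v) = Q v + (B v d')^2) :
    d = d' := by
  apply B_ext
  intro v
  apply Fsq_inj
  show (B v d)^2 = (B v d')^2
  have := (h v).symm.trans (h' v)
  exact (add_right_injective (Q v) this)

end QF
end AuxDev
namespace AuxDev
variable {f m : ℕ}

/-! ### Counting toolkit -/

/-- cardinality of the set of elements satisfying `P` -/
noncomputable def cnt {α : Type*} [Fintype α] (P : α → Prop) : ℕ :=
  (Finset.univ.filter P).card

lemma cnt_congr {α : Type*} [Fintype α] {P R : α → Prop} (h : ∀ a, P a ↔ R a) :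
    cnt P = cnt R := by
  unfold cnt
  congr 1
  exact Finset.filter_congr (fun a _ => by
    constructor
    · intro hh; exact (h a).mp (by simpa using hh)
    · intro hh; exact (h a).mpr (by simpa using hh))

lemma cnt_equiv {α β : Type*} [Fintype α] [Fintype β] (σ : α ≃ β) (P : β → Prop) :
    cnt (fun a => P (σ a)) = cnt P := by
  unfold cnt
  apply Finset.card_bij (fun a _ => σ a)
  · intro a ha
    simp only [Finset.mem_filter, Finset.mem_univ, true_and] at ha ⊢
    exact ha
  · intro a _ a' _ h
    exact σ.injective h
  · intro b hb
    refine ⟨σ.symm b, ?_, by simp⟩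
    simp only [Finset.mem_filter, Finset.mem_univ, true_and] at hb ⊢
    simpa using hb

lemma cnt_prod {α β : Type*} [Fintype α] [Fintype β] (P : α × β → Prop) :
    cnt P = ∑ a : α, cnt (fun b => P (a, b)) := by
  unfold cnt
  simp only [Finset.card_filter]
  rw [Fintype.sum_prod_type]

lemma cnt_fiberwise {α : Type*} [Fintype α] (P : α → Prop) (R : α → Fq f) :
    cnt P = ∑ t : Fq f, cnt (fun z => P z ∧ R z = t) := by
  unfold cnt
  simp only [Finset.card_filter]
  rw [Finset.sum_comm]
  refine Finset.sum_congr rfl fun z _ => ?_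
  by_cases h : P z
  · simp [h]
  · simp [h]

lemma cnt_translate (e : V f m) (P : V f m → Prop) :
    cnt (fun z => P (z + e)) = cnt P :=
  cnt_equiv (Equiv.addRight e) P

lemma cnt_pos {α : Type*} [Fintype α] {P : α → Prop} (h : ∃ a, P a) : 0 < cnt P := by
  obtain ⟨a, ha⟩ := h
  unfold cnt
  apply Finset.card_pos.mpr
  exact ⟨a, by simpa using ha⟩

lemma cnt_exists {α : Type*} [Fintype α] {P : α → Prop} (h : 0 < cnt P) : ∃ a, P a := by
  unfold cnt at h
  obtain ⟨a, ha⟩ := Finset.card_pos.mp h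
  exact ⟨a, by simpa using ha⟩

/-- equidistribution: if the level of `R` within the region `P` can be shifted
arbitrarily by translations preserving `P`, all levels are equally represented. -/
lemma level_count {P : V f m → Prop} {R : V f m → Fq f}
    (hshift : ∀ δ : Fq f, ∃ e, (∀ z, P (z + e) ↔ P z) ∧ (∀ z, P z → R (z + e) = R z + δ))
    (t t' : Fq f) : cnt (fun z => P z ∧ R z = t) = cnt (fun z => P z ∧ R z = t') := by
  obtain ⟨e, he1, he2⟩ := hshift (t + t')
  calc cnt (fun z => P z ∧ R z = t)
      = cnt (fun z => P (z + e) ∧ R (z + e) = t') := by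
        apply cnt_congr
        intro z
        rw [he1]
        constructor
        · rintro ⟨h1, h2⟩
          refine ⟨h1, by rw [he2 z h1]; linear_combination h2 + F2 t⟩
        · rintro ⟨h1, h2⟩
          rw [he2 z h1] at h2
          refine ⟨h1, by linear_combination h2 - F2 t⟩
    _ = cnt (fun z => P z ∧ R z = t') := cnt_translate e (fun z => P z ∧ R z = t')
lemma level_nonempty {P : V f m → Prop} {R : V f m → Fq f}
    (hshift : ∀ δ : Fq f, ∃ e, (∀ z, P (z + e) ↔ P z) ∧ (∀ z, P z → R (z + e) = R z + δ))
    (hP : ∃ z, P z) (t : Fq f) : ∃ z, P z ∧ R z = t := by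
  apply cnt_exists
  by_contra h
  push_neg at h
  have h0 : cnt (fun z => P z ∧ R z = t) = 0 := by omega
  have hall : ∀ t', cnt (fun z => P z ∧ R z = t') = 0 := fun t' => by
    rw [level_count hshift t' t, h0]
  have := cnt_fiberwise P R
  rw [Finset.sum_eq_zero (fun t' _ => hall t')] at this
  exact absurd (cnt_pos hP) (by omega)

/-- fibers of a surjective additive map all have cardinality `|V|/q`. -/
lemma fiber_card (L : V f m → Fq f) (hadd : ∀ z w, L (z + w) = L z + L w)
    (hsur : Function.Surjective L) (t : Fq f) :
    cnt (fun z => L z = t) * Fintype.card (Fq f) = Fintype.card (V f m) := by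
  have heq : ∀ t', cnt (fun z => L z = t') = cnt (fun z => L z = t) := by
    intro t'
    have := level_count (P := fun _ => True) (R := L) ?_ t' t
    · unfold cnt at this ⊢
      simpa using this
    · intro δ
      obtain ⟨e, he⟩ := hsur δ
      exact ⟨e, fun z => Iff.rfl, fun z _ => by rw [hadd, he]⟩
  have hsum : ∑ t' : Fq f, cnt (fun z => L z = t') = Fintype.card (V f m) := by
    have h1 := cnt_fiberwise (fun _ : V f m => True) L
    have h2 : cnt (fun _ : V f m => True) = Fintype.card (V f m) := by
      unfold cnt
      rw [Finset.filter_true, Finset.card_univ]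
    rw [h2] at h1
    rw [h1]
    exact Finset.sum_congr rfl fun t' _ => cnt_congr (fun z => by simp)
  rw [← hsum, Finset.sum_congr rfl (fun t' _ => heq t'), Finset.sum_const, Finset.card_univ,
    smul_eq_mul, mul_comm]

end AuxDev
namespace AuxDev
variable {f m : ℕ}

lemma Vadd_eq_zero {u v : V f m} (h : u + v = 0) : u = v := by
  have := congrArg (· + v) h
  simpa [add_assoc, V2] using this

lemma indep_pair {u c : V f m} (hind : ∀ μ : Fq f, u ≠ μ • c) :
    ∃ w, B u w = 1 ∧ B c w = 0 := by
  have hu0 : u ≠ 0 := by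
    intro h
    exact hind 0 (by simpa using h)
  by_cases hker : ∀ w, B c w = 0 → B u w = 0
  · by_cases hc : c = 0
    · exfalso
      apply hu0
      apply B_nondeg
      intro w
      exact hker w (by rw [hc, B_zero_left])
    · obtain ⟨w₀, hw₀⟩ := B_exists_one hc
      exfalso
      apply hind (B u w₀)
      apply B_ext
      intro v
      rw [B_comm v u, B_smul_right, B_comm v c]
      have hw' : B c (v + (B c v) • w₀) = 0 := by
        rw [B_add_right, B_smul_right, hw₀, mul_one, F2]
      have h2 := hker _ hw'
      rw [B_add_right, B_smul_right] at h2
      rw [Fadd_eq_zero h2]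
      ring
  · push_neg at hker
    obtain ⟨w, hw1, hw2⟩ := hker
    exact ⟨(B u w)⁻¹ • w, by rw [B_smul_right, inv_mul_cancel₀ hw2],
      by rw [B_smul_right, hw1, mul_zero]⟩

section QF
variable {Q : V f m → Fq f}
  (hp : ∀ u w : V f m, Q (u + w) = Q u + Q w + B u w)
  (hs : ∀ (μ : Fq f) (v : V f m), Q (μ • v) = μ^2 * Q v)

include hp hs

lemma exz {x y : V f m} (hxy : B x y = 0) (hx0 : x ≠ 0) (hy0 : y ≠ 0) (hne : x ≠ y)
    (hQ : Q y = Q x) (hH : ∃ β : Fq f, β^2 + β = Q x) :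
    ∃ z, Q z = Q x ∧ B x z ≠ 0 ∧ B y z ≠ 0 := by
  by_cases hdep : ∃ μ : Fq f, y = μ • x
  · -- y = μ • x, forces Q x = 0
    obtain ⟨μ, hμ⟩ := hdep
    have hμ0 : μ ≠ 0 := by
      intro h
      exact hy0 (by simpa [h] using hμ)
    have hμ1 : μ ≠ 1 := by
      intro h
      exact hne (by simpa [h] using hμ.symm)
    have hlam0 : Q x = 0 := by
      have hqq : μ^2 * Q x = Q x := by rw [← hs, ← hμ, hQ]
      by_contra hlam
      have hμ2 : μ^2 = 1 := mul_right_cancel₀ hlam (by rw [hqq, one_mul])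
      have h1 : (μ + 1)^2 = 0 := by rw [Fsq_add, hμ2, one_pow, F2]
      have h2 := pow_eq_zero_iff (two_ne_zero) |>.mp h1
      exact hμ1 (Fadd_eq_zero (by simpa using h2))
    have hlev := level_nonempty (P := fun z => B x z = 1) (R := Q) ?_ (B_exists_one hx0) (Q x)
    · obtain ⟨z, hz1, hz2⟩ := hlev
      refine ⟨z, hz2, by rw [hz1]; exact one_ne_zero, ?_⟩
      rw [hμ, B_smul_left, hz1, mul_one]
      exact hμ0
    · intro δ
      refine ⟨δ • x, ?_, ?_⟩
      · intro z
        rw [B_add_right, B_smul_right, B_self, mul_zero, add_zero]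
      · intro z hz
        rw [hp, hs, hlam0, mul_zero, B_smul_right, B_comm z x, hz, mul_one]
        ring
  · -- independent case
    push_neg at hdep
    have hdep' : ∀ μ : Fq f, x ≠ μ • y := by
      intro μ h
      by_cases hμ : μ = 0
      · exact hx0 (by simpa [hμ] using h)
      · exact hdep μ⁻¹ (by rw [h, smul_smul, inv_mul_cancel₀ hμ, one_smul])
    obtain ⟨w₂, hw₂1, hw₂2⟩ := indep_pair hdep   -- B y w₂ = 1, B x w₂ = 0
    obtain ⟨w₁, hw₁1, hw₁2⟩ := indep_pair hdep'  -- B x w₁ = 1, B y w₁ = 0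
    obtain ⟨β, hβ⟩ := hH
    by_cases hlam : Q x = 0
    · -- slice (1,1), translations by δ • x
      have hlev := level_nonempty (P := fun z => B x z = 1 ∧ B y z = 1) (R := Q) ?_
        ⟨w₁ + w₂, by rw [B_add_right, hw₁1, hw₂2, add_zero],
          by rw [B_add_right, hw₁2, hw₂1, zero_add]⟩ (Q x)
      · obtain ⟨z, ⟨hz1, hz2⟩, hz3⟩ := hlev
        exact ⟨z, hz3, by rw [hz1]; exact one_ne_zero, by rw [hz2]; exact one_ne_zero⟩
      · intro δ
        refine ⟨δ • x, ?_, ?_⟩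
        · intro z
          rw [B_add_right x, B_smul_right, B_self, mul_zero, add_zero,
            B_add_right y, B_smul_right, B_comm y x, hxy, mul_zero, add_zero]
        · rintro z ⟨hz1, hz2⟩
          rw [hp, hs, hlam, mul_zero, B_smul_right, B_comm z x, hz1, mul_one]
          ring
    · -- Q x ≠ 0 : slice (1, β), translations by τ • (x + y)
      have hβ0 : β ≠ 0 := by
        intro h
        rw [h] at hβ
        simp at hβ
        exact hlam hβ.symm
      have hβ1 : (1 : Fq f) + β ≠ 0 := by
        intro h
        have hb1 : β = 1 := (Fadd_eq_zero h).symm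
        rw [hb1] at hβ
        apply hlam
        rw [← hβ, one_pow, F2]
      have hQxy : Q (x + y) = 0 := by
        rw [hp, hQ, hxy, add_zero, F2]
      have hlev := level_nonempty (P := fun z => B x z = 1 ∧ B y z = β) (R := Q) ?_
        ⟨w₁ + β • w₂, by rw [B_add_right, hw₁1, B_smul_right, hw₂2, mul_zero, add_zero],
          by rw [B_add_right, hw₁2, B_smul_right, hw₂1, mul_one, zero_add]⟩ (Q x)
      · obtain ⟨z, ⟨hz1, hz2⟩, hz3⟩ := hlev
        exact ⟨z, hz3, by rw [hz1]; exact one_ne_zero, by rw [hz2]; exact hβ0⟩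
      · intro δ
        set τ := δ / (1 + β) with hτ
        refine ⟨τ • (x + y), ?_, ?_⟩
        · intro z
          have e1 : B x (z + τ • (x + y)) = B x z := by
            rw [B_add_right x z, B_smul_right, B_add_right x x, B_self, hxy, add_zero, mul_zero,
              add_zero]
          have e2 : B y (z + τ • (x + y)) = B y z := by
            rw [B_add_right y z, B_smul_right, B_add_right y x, B_comm y x, hxy, B_self, add_zero,
              mul_zero, add_zero]
          rw [e1, e2]
        · rintro z ⟨hz1, hz2⟩
          rw [hp, hs, hQxy, mul_zero, B_smul_right, B_add_right z x y, B_comm z x, B_comm z y, hz1, hz2]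
          have hd : τ * (1 + β) = δ := div_mul_cancel₀ δ hβ1
          linear_combination hd

lemma connect {x y : V f m} (hxy : B x y ≠ 0) (hQ : Q y = Q x) :
    ∃ g : Sp f m, g ∈ Ogrp Q ∧ g • y = x := by
  have hQxy : Q (x + y) = B x y := by
    rw [hp, hQ, F2, zero_add]
  refine ⟨sympT (Q (x + y))⁻¹ (x + y), refl_mem hp hs (by rw [hQxy]; exact hxy), ?_⟩
  rw [sympT_smul]
  have hBy : B y (x + y) = B x y := by
    rw [B_add_right, B_self, add_zero, B_comm]
  rw [hBy, hQxy, inv_mul_cancel₀ hxy, one_smul]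
  rw [← add_assoc, add_comm y x, add_assoc, V2, add_zero]

lemma witt {x y : V f m} (hx0 : x ≠ 0) (hy0 : y ≠ 0) (hQ : Q y = Q x)
    (hH : ∃ β : Fq f, β^2 + β = Q x) :
    ∃ g : Sp f m, g ∈ Ogrp Q ∧ g • y = x := by
  by_cases hne : x = y
  · exact ⟨1, one_mem _, by rw [← hne, one_smul]⟩
  by_cases hxy : B x y = 0
  · obtain ⟨z, hz1, hz2, hz3⟩ := exz hp hs hxy hx0 hy0 hne hQ hH
    obtain ⟨g₁, hg₁, hg₁y⟩ := connect hp hs (by rwa [B_comm]) (by rw [hQ, hz1])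
    obtain ⟨g₂, hg₂, hg₂z⟩ := connect hp hs hz2 hz1
    exact ⟨g₂ * g₁, mul_mem hg₂ hg₁, by rw [mul_smul, hg₁y, hg₂z]⟩
  · exact connect hp hs hxy hQ

end QF
end AuxDev
namespace AuxDev
variable {f m : ℕ}

section QF
variable {Q : V f m → Fq f}
  (hp : ∀ u w : V f m, Q (u + w) = Q u + Q w + B u w)
  (hs : ∀ (μ : Fq f) (v : V f m), Q (μ • v) = μ^2 * Q v)

/-- the cocycle `C g` with `Q (g⁻¹ • v) = Q v + B(v, C g)²`. -/
noncomputable def Cc (hp : ∀ u w : V f m, Q (u + w) = Q u + Q w + B u w)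
    (hs : ∀ (μ : Fq f) (v : V f m), Q (μ • v) = μ^2 * Q v) (g : Sp f m) : V f m :=
  (cocycle_exists hp hs g).choose

include hp hs

lemma Cc_spec (g : Sp f m) : ∀ v, Q (g⁻¹ • v) = Q v + (B v (Cc hp hs g))^2 :=
  (cocycle_exists hp hs g).choose_spec

lemma Cc_unique (g : Sp f m) {d : V f m} (h : ∀ v, Q (g⁻¹ • v) = Q v + (B v d)^2) :
    Cc hp hs g = d :=
  cocycle_unique g (Cc_spec hp hs g) h

lemma Cc_one : Cc hp hs (1 : Sp f m) = 0 := by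
  apply Cc_unique hp hs
  intro v
  rw [inv_one, one_smul, B_zero_right]
  ring

lemma Cc_coset (g o : Sp f m) (ho : o ∈ Ogrp Q) : Cc hp hs (g * o) = Cc hp hs g := by
  apply Cc_unique hp hs
  intro v
  rw [mul_inv_rev, mul_smul]
  rw [(inv_mem ho : o⁻¹ ∈ Ogrp Q) (g⁻¹ • v)]
  exact Cc_spec hp hs g v

lemma Cc_equivar (g o : Sp f m) (ho : o ∈ Ogrp Q) :
    Cc hp hs (o * g) = o • Cc hp hs g := by
  apply Cc_unique hp hs
  intro v
  rw [mul_inv_rev, mul_smul]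
  calc Q (g⁻¹ • o⁻¹ • v) = Q (o⁻¹ • v) + (B (o⁻¹ • v) (Cc hp hs g))^2 := Cc_spec hp hs g _
    _ = Q v + (B v (o • Cc hp hs g))^2 := by
        rw [(inv_mem ho : o⁻¹ ∈ Ogrp Q) v, sp_B_inv]

lemma Cc_inj (g₁ g₂ : Sp f m) (h : Cc hp hs g₁ = Cc hp hs g₂) : g₁⁻¹ * g₂ ∈ Ogrp Q := by
  intro w
  show Q ((g₁⁻¹ * g₂) • w) = Q w
  rw [mul_smul]
  rw [Cc_spec hp hs g₁ (g₂ • w), h]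
  rw [← Cc_spec hp hs g₂ (g₂ • w), inv_smul_smul]

omit hp hs in
lemma cnt_zero {α : Type*} [Fintype α] {P : α → Prop} (h : ∀ a, ¬ P a) : cnt P = 0 := by
  unfold cnt
  rw [Finset.card_eq_zero, Finset.filter_eq_empty_iff]
  intro a _
  exact h a

omit hp hs in
lemma B_fun_surj {u : V f m} (hu : u ≠ 0) : Function.Surjective (fun w => B u w) := by
  intro t
  obtain ⟨w, hw⟩ := B_exists_one hu
  refine ⟨t • w, ?_⟩
  show B u (t • w) = t
  rw [B_smul_right, hw, mul_one]

/-- the shear equivalence `(v, w) ↦ (v + w, w)` -/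
def addShear (f m : ℕ) : V f m × V f m ≃ V f m × V f m :=
  ⟨fun p => (p.1 + p.2, p.2), fun p => (p.1 + p.2, p.2),
    fun p => by simp [add_assoc, V2], fun p => by simp [add_assoc, V2]⟩

/-- Number of points of a hyperplane-type fiber. -/
noncomputable def NH (f m : ℕ) : ℕ := Fintype.card (V f m) / Fintype.card (Fq f)

omit hp hs in
lemma fiber_card' {L : V f m → Fq f} (hadd : ∀ z w, L (z + w) = L z + L w)
    (hsur : Function.Surjective L) (t : Fq f) : cnt (fun z => L z = t) = NH f m := by
  have h := fiber_card L hadd hsur t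
  have hq : 0 < Fintype.card (Fq f) := Fintype.card_pos
  unfold NH
  rw [← h, Nat.mul_div_cancel _ hq]

omit hp hs in
lemma ey_ne (i : Fin m) : ey i ≠ (0 : V f m) := by
  intro h
  have := congrArg (fun v : V f m => v.2 i) h
  simp [ey] at this

omit hp hs in
lemma NH_mul (hm : 0 < m) : NH f m * Fintype.card (Fq f) = Fintype.card (V f m) := by
  have h := fiber_card (fun z : V f m => B (ey ⟨0, hm⟩) z)
    (fun z w => B_add_right _ z w) (B_fun_surj (ey_ne _)) 0
  have h2 := fiber_card' (L := fun z : V f m => B (ey ⟨0, hm⟩) z)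
    (fun z w => B_add_right _ z w) (B_fun_surj (ey_ne _)) 0
  rw [h2] at h
  exact h

omit hp hs in
lemma NH_lt (hm : 0 < m) : NH f m < Fintype.card (V f m) := by
  have h := NH_mul (f := f) hm
  have hq : 2 ≤ Fintype.card (Fq f) := Fintype.one_lt_card
  have hv : 0 < Fintype.card (V f m) := Fintype.card_pos
  nlinarith

omit hp hs in
lemma addShear_apply (p : V f m × V f m) : addShear f m p = (p.1 + p.2, p.2) := rfl

/-- The key counting fact: values of the cocycle have `Q`-value in the Artin-Schreier set. -/
lemma Cc_mem_X (hm : 0 < m) (g : Sp f m) : ∃ β : Fq f, β^2 + β = Q (Cc hp hs g) := by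
  by_contra hnc
  push_neg at hnc
  set c := Cc hp hs g with hc
  have hc0 : c ≠ 0 := by
    intro h
    exact hnc 0 (by rw [h, Q_zero hs]; ring)
  -- the two counts
  set S1 := cnt (fun p : V f m × V f m => Q (p.1 + p.2) = Q (g⁻¹ • p.2)) with hS1
  set S0 := cnt (fun p : V f m × V f m => Q (p.1 + p.2) = Q p.2) with hS0
  -- Step A : S1 = S0
  have hA : S1 = S0 := by
    have e1 : S1 = cnt (fun p : V f m × V f m => Q p.1 = Q (g⁻¹ • p.2)) := by
      rw [hS1, ← cnt_equiv (addShear f m) (fun p => Q p.1 = Q (g⁻¹ • p.2))]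
      apply cnt_congr
      intro p
      simp only [addShear_apply]
    have e2 : cnt (fun p : V f m × V f m => Q p.1 = Q (g⁻¹ • p.2))
        = cnt (fun p : V f m × V f m => Q p.1 = Q p.2) := by
      rw [← cnt_equiv (Equiv.prodCongr (Equiv.refl (V f m)) (MulAction.toPerm g))
        (fun p => Q p.1 = Q (g⁻¹ • p.2))]
      apply cnt_congr
      intro p
      simp only [Equiv.prodCongr_apply, Equiv.refl_apply, MulAction.toPerm_apply,
        Prod.map_fst, Prod.map_snd, id_eq]
      rw [inv_smul_smul]
    have e3 : S0 = cnt (fun p : V f m × V f m => Q p.1 = Q p.2) := by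
      rw [hS0, ← cnt_equiv (addShear f m) (fun p => Q p.1 = Q p.2)]
      apply cnt_congr
      intro p
      simp only [addShear_apply]
    rw [e1, e2, e3]
  -- Step B : pointwise comparison
  have hS1sum : S1 = ∑ u : V f m, cnt (fun w => Q (u + w) = Q (g⁻¹ • w)) :=
    cnt_prod _
  have hS0sum : S0 = ∑ u : V f m, cnt (fun w => Q (u + w) = Q w) :=
    cnt_prod _
  -- values
  have hle : ∀ u : V f m, cnt (fun w => Q (u + w) = Q (g⁻¹ • w))
      ≤ cnt (fun w => Q (u + w) = Q w) := by
    intro u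
    by_cases hu0 : u = 0
    · -- LHS = NH, RHS = card V
      subst hu0
      have hr : cnt (fun w : V f m => Q (0 + w) = Q w) = Fintype.card (V f m) := by
        have : cnt (fun w : V f m => Q (0 + w) = Q w) = cnt (fun _ : V f m => True) := by
          apply cnt_congr; intro w; simp [zero_add]
        rw [this]
        unfold cnt
        rw [Finset.filter_true, Finset.card_univ]
      have hl : cnt (fun w : V f m => Q (0 + w) = Q (g⁻¹ • w)) = NH f m := by
        have : cnt (fun w : V f m => Q (0 + w) = Q (g⁻¹ • w))
            = cnt (fun w : V f m => B c w = 0) := by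
          apply cnt_congr; intro w
          rw [zero_add, Cc_spec hp hs g w, ← hc]
          constructor
          · intro h
            have h2 : (B w c)^2 = 0 := by linear_combination -h
            rw [B_comm]
            exact pow_eq_zero_iff two_ne_zero |>.mp h2
          · intro h
            rw [B_comm w c, h]
            ring
        rw [this]
        exact fiber_card' (fun z w => B_add_right _ z w) (B_fun_surj hc0) 0
      rw [hl, hr]
      exact le_of_lt (NH_lt hm)
    by_cases hudep : ∃ μ : Fq f, u = μ • c
    · -- LHS = 0
      obtain ⟨μ, hμ⟩ := hudep
      have hμ0 : μ ≠ 0 := by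
        intro h; exact hu0 (by simpa [h] using hμ)
      have hl : cnt (fun w : V f m => Q (u + w) = Q (g⁻¹ • w)) = 0 := by
        apply cnt_zero
        intro w hw
        rw [hp, Cc_spec hp hs g w, ← hc] at hw
        -- Q u + Q w + B u w = Q w + (B w c)^2
        apply hnc ((B c w) / μ)
        have hBu : B u w = μ * B c w := by rw [hμ, B_smul_left]
        have hQu : Q u = μ^2 * Q c := by rw [hμ, hs]
        rw [hBu, hQu, B_comm w c] at hw
        field_simp
        linear_combination -hw + F2 (μ * B c w)
      rw [hl]
      exact Nat.zero_le _
    · -- both NH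
      push_neg at hudep
      obtain ⟨w₁, hw₁1, hw₁2⟩ := indep_pair hudep
      have hr : cnt (fun w : V f m => Q (u + w) = Q w) = NH f m := by
        have : cnt (fun w : V f m => Q (u + w) = Q w)
            = cnt (fun w : V f m => B u w = Q u) := by
          apply cnt_congr; intro w
          rw [hp]
          constructor
          · intro h; linear_combination h - F2 (Q u)
          · intro h; linear_combination h + F2 (Q u)
        rw [this]
        exact fiber_card' (fun z w => B_add_right _ z w) (B_fun_surj hu0) (Q u)
      have hl : cnt (fun w : V f m => Q (u + w) = Q (g⁻¹ • w)) = NH f m := by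
        have : cnt (fun w : V f m => Q (u + w) = Q (g⁻¹ • w))
            = cnt (fun w : V f m => B u w + (B c w)^2 = Q u) := by
          apply cnt_congr; intro w
          rw [hp, Cc_spec hp hs g w, ← hc, B_comm w c]
          constructor
          · intro h; linear_combination h - F2 (Q u) + F2 ((B c w)^2)
          · intro h; linear_combination h + F2 (Q u) - F2 ((B c w)^2)
        rw [this]
        apply fiber_card'
        · intro z w
          show B u (z + w) + B c (z + w)^2 = B u z + B c z^2 + (B u w + B c w^2)
          rw [B_add_right, B_add_right c z w, Fsq_add]
          ring
        · intro t
          refine ⟨t • w₁, ?_⟩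
          show B u (t • w₁) + B c (t • w₁)^2 = t
          rw [B_smul_right, hw₁1, B_smul_right, hw₁2]
          ring
      rw [hl, hr]
  have hstrict : cnt (fun w : V f m => Q ((0 : V f m) + w) = Q (g⁻¹ • w))
      < cnt (fun w : V f m => Q ((0 : V f m) + w) = Q w) := by
    have hr : cnt (fun w : V f m => Q ((0 : V f m) + w) = Q w) = Fintype.card (V f m) := by
      have : cnt (fun w : V f m => Q ((0:V f m) + w) = Q w) = cnt (fun _ : V f m => True) := by
        apply cnt_congr; intro w; simp [zero_add]
      rw [this]
      unfold cnt
      rw [Finset.filter_true, Finset.card_univ]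
    have hl : cnt (fun w : V f m => Q ((0 : V f m) + w) = Q (g⁻¹ • w)) = NH f m := by
      have : cnt (fun w : V f m => Q ((0:V f m) + w) = Q (g⁻¹ • w))
          = cnt (fun w : V f m => B c w = 0) := by
        apply cnt_congr; intro w
        rw [zero_add, Cc_spec hp hs g w, ← hc]
        constructor
        · intro h
          have h2 : (B w c)^2 = 0 := by linear_combination -h
          rw [B_comm]
          exact pow_eq_zero_iff two_ne_zero |>.mp h2
        · intro h
          rw [B_comm w c, h]
          ring
      rw [this]
      exact fiber_card' (fun z w => B_add_right _ z w) (B_fun_surj hc0) 0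
    rw [hl, hr]
    exact NH_lt hm
  have : S1 < S0 := by
    rw [hS1sum, hS0sum]
    exact Finset.sum_lt_sum (fun u _ => hle u) ⟨0, Finset.mem_univ _, hstrict⟩
  omega

/-- surjectivity of the cocycle onto the Artin-Schreier set. -/
lemma Cc_surj {c : V f m} (hc : ∃ β : Fq f, β^2 + β = Q c) :
    ∃ g : Sp f m, Cc hp hs g = c := by
  obtain ⟨β, hβ⟩ := hc
  by_cases hc0 : c = 0
  · exact ⟨1, by rw [Cc_one hp hs, hc0]⟩
  by_cases hQc : Q c = 0
  · refine ⟨sympT 1 c, ?_⟩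
    apply Cc_unique hp hs
    intro v
    rw [sympT_inv, Q_sympT hp hs, hQc]
    ring
  · have hβ0 : β ≠ 0 := by
      intro h
      rw [h] at hβ
      apply hQc
      rw [← hβ]
      ring
    set lam := fsqrt (β / Q c) with hlam
    set e := lam • c with he
    have hQe : Q e = β := by
      rw [he, hs, hlam, fsqrt_sq, div_mul_cancel₀ _ hQc]
    refine ⟨sympT 1 e, ?_⟩
    apply Cc_unique hp hs
    intro v
    rw [sympT_inv, Q_sympT hp hs, hQe, he, B_smul_right, hlam]
    have h1 : (fsqrt (β / Q c))^2 = β / Q c := fsqrt_sq _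
    have h2 : (1:Fq f)^2 * β + 1 = β + 1 := by ring
    rw [h2]
    have h3 : (β + 1) * (fsqrt (β / Q c) * B v c)^2 = (B v c)^2 := by
      rw [mul_pow, h1]
      field_simp
      linear_combination (B v c)^2 * hβ
    rw [h3]

end QF
end AuxDev
namespace AuxDev
variable {f m : ℕ}

/-- the Artin–Schreier additive homomorphism `x ↦ x² + x`. -/
noncomputable def asMap (f : ℕ) : Fq f →+ Fq f :=
  AddMonoidHom.mk' (fun x => x^2 + x) (by
    intro a b
    rw [Fsq_add]
    ring)

lemma asMap_apply (x : Fq f) : asMap f x = x^2 + x := rfl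

lemma card_ker_asMap : Nat.card (asMap f).ker = 2 := by
  have hset : ((asMap f).ker : Set (Fq f)) = {0, 1} := by
    ext x
    simp only [SetLike.mem_coe, AddMonoidHom.mem_ker, asMap_apply, Set.mem_insert_iff,
      Set.mem_singleton_iff]
    constructor
    · intro h
      rcases mul_eq_zero.mp (show x * (x + 1) = 0 by linear_combination h) with h1 | h1
      · exact Or.inl h1
      · exact Or.inr (Fadd_eq_zero h1)
    · rintro (h | h) <;> subst h
      · ring
      · linear_combination (F2 (1 : Fq f))
  have : Nat.card (asMap f).ker = (({0, 1} : Set (Fq f))).ncard := by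
    rw [← hset]
    rfl
  rw [this, Set.ncard_pair (zero_ne_one)]

lemma card_range_asMap (hf : 1 ≤ f) : Nat.card (asMap f).range * 2 = 2^f := by
  have h1 : Nat.card (Fq f) = 2^f := GaloisField.card 2 f (by omega)
  have lag := AddSubgroup.card_eq_card_quotient_mul_card_addSubgroup ((asMap f).ker)
  have iso : Nat.card (Fq f ⧸ (asMap f).ker) = Nat.card (asMap f).range :=
    Nat.card_congr (QuotientAddGroup.quotientKerEquivRange (asMap f)).toEquiv
  rw [h1, iso, card_ker_asMap] at lag
  exact lag.symm

lemma main_count (hf : 1 ≤ f) (hm : 2 ≤ m) (Q : V f m → Fq f)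
    (hp : ∀ u w : V f m, Q (u + w) = Q u + Q w + B u w)
    (hs : ∀ (μ : Fq f) (v : V f m), Q (μ • v) = μ^2 * Q v)
    (hwit : ∀ t : Fq f, ∃ v : V f m, v ≠ 0 ∧ Q v = t) :
    Nat.card (Quotient (MulAction.orbitRel (Ogrp Q) (Sp f m ⧸ Ogrp Q))) = 2^f/2 + 1 := by
  have hm0 : 0 < m := by omega
  classical
  -- the invariant
  set ov : Sp f m → Option {t : Fq f // ∃ β : Fq f, β^2 + β = t} := fun g =>
    if h : Cc hp hs g = 0 then none
    else some ⟨Q (Cc hp hs g), Cc_mem_X hp hs hm0 g⟩ with hov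
  have ov_eq : ∀ g₁ g₂ : Sp f m, Cc hp hs g₁ = Cc hp hs g₂ → ov g₁ = ov g₂ := by
    intro g₁ g₂ h
    simp only [hov, h]
  have val_aux : ∀ (a b : Sp f m), Setoid.r (self := QuotientGroup.leftRel (Ogrp Q)) a b →
      ov a = ov b := by
    intro a b hab
    rw [QuotientGroup.leftRel_apply] at hab
    apply ov_eq
    have hb : b = a * (a⁻¹ * b) := by group
    rw [hb, Cc_coset hp hs a _ hab]
  set val : (Sp f m ⧸ Ogrp Q) → Option {t : Fq f // ∃ β : Fq f, β^2 + β = t} :=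
    fun x => Quotient.liftOn' x ov val_aux with hval
  have val_mk : ∀ g : Sp f m, val ((g : Sp f m ⧸ Ogrp Q)) = ov g := fun g => rfl
  have smul_mk : ∀ (o : Ogrp Q) (g : Sp f m),
      o • ((g : Sp f m) : Sp f m ⧸ Ogrp Q) = (((o : Sp f m) * g : Sp f m) : Sp f m ⧸ Ogrp Q) :=
    fun _ _ => rfl
  have Ccoz : ∀ (o : Ogrp Q) (g : Sp f m),
      Cc hp hs ((o : Sp f m) * g) = (o : Sp f m) • Cc hp hs g :=
    fun o g => Cc_equivar hp hs g o o.2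
  -- invariance under the O-action
  have val_inv : ∀ (o : Ogrp Q) (x : Sp f m ⧸ Ogrp Q), val (o • x) = val x := by
    intro o x
    induction x using QuotientGroup.induction_on with
    | H g =>
      rw [smul_mk, val_mk, val_mk]
      apply Eq.symm
      by_cases h : Cc hp hs g = 0
      · simp only [hov]
        rw [dif_pos h, dif_pos (by rw [Ccoz, h, sp_smul_zero])]
      · have hno : Cc hp hs ((o : Sp f m) * g) ≠ 0 := by
          rw [Ccoz]
          exact sp_smul_ne_zero _ h
        simp only [hov]
        rw [dif_neg h, dif_neg hno]
        have hQ : Q (Cc hp hs ((o : Sp f m) * g)) = Q (Cc hp hs g) := by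
          rw [Ccoz]
          exact o.2 _
        simp only [Option.some.injEq, Subtype.mk.injEq]
        exact hQ.symm
  -- the classifying map on orbit classes
  set Φ : Quotient (MulAction.orbitRel (Ogrp Q) (Sp f m ⧸ Ogrp Q)) →
      Option {t : Fq f // ∃ β : Fq f, β^2 + β = t} :=
    fun z => Quotient.liftOn z val (by
      intro x y hxy
      obtain ⟨o, ho⟩ := hxy
      rw [← ho, val_inv]) with hΦ
  have Φ_mk : ∀ x, Φ (Quotient.mk (MulAction.orbitRel (Ogrp Q) (Sp f m ⧸ Ogrp Q)) x) = val x :=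
    fun x => rfl
  have hbij : Function.Bijective Φ := by
    constructor
    · -- injective
      intro z₁ z₂ h
      induction z₁ using Quotient.inductionOn with
      | h x₁ =>
      induction z₂ using Quotient.inductionOn with
      | h x₂ =>
      induction x₁ using QuotientGroup.induction_on with
      | H g₁ =>
      induction x₂ using QuotientGroup.induction_on with
      | H g₂ =>
      rw [Φ_mk, Φ_mk, val_mk, val_mk] at h
      by_cases h1 : Cc hp hs g₁ = 0 <;> by_cases h2 : Cc hp hs g₂ = 0
      · -- both zero: same coset
        apply congrArg
        apply (QuotientGroup.eq (s := Ogrp Q)).mpr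
        exact Cc_inj hp hs g₁ g₂ (h1.trans h2.symm)
      · simp only [hov, dif_pos h1, dif_neg h2] at h
        exact absurd h (by simp)
      · simp only [hov, dif_neg h1, dif_pos h2] at h
        exact absurd h (by simp)
      · simp only [hov, dif_neg h1, dif_neg h2, Option.some.injEq, Subtype.mk.injEq] at h
        -- h : Q (Cc g₁) = Q (Cc g₂)
        obtain ⟨o, ho, hsm⟩ := witt hp hs h1 h2 (by rw [h]) (Cc_mem_X hp hs hm0 g₁)
        apply Quotient.sound
        refine ⟨⟨o, ho⟩, ?_⟩
        show (⟨o, ho⟩ : Ogrp Q) • ((g₂ : Sp f m) : Sp f m ⧸ Ogrp Q) = ((g₁ : Sp f m) : Sp f m ⧸ Ogrp Q)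
        rw [smul_mk]
        apply (QuotientGroup.eq (s := Ogrp Q)).mpr
        apply Cc_inj hp hs
        rw [Ccoz ⟨o, ho⟩ g₂]
        exact hsm
    · -- surjective
      intro ot
      match ot with
      | none =>
        refine ⟨Quotient.mk _ ((1 : Sp f m) : Sp f m ⧸ Ogrp Q), ?_⟩
        rw [Φ_mk, val_mk]
        simp only [hov]
        rw [dif_pos (Cc_one hp hs)]
      | some ⟨t, ht⟩ =>
        obtain ⟨v₀, hv₀, hQv₀⟩ := hwit t
        obtain ⟨g, hg⟩ := Cc_surj hp hs (c := v₀) (by rw [hQv₀]; exact ht)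
        refine ⟨Quotient.mk _ ((g : Sp f m) : Sp f m ⧸ Ogrp Q), ?_⟩
        rw [Φ_mk, val_mk]
        simp only [hov]
        rw [dif_neg (by rw [hg]; exact hv₀)]
        simp only [Option.some.injEq, Subtype.mk.injEq]
        rw [hg, hQv₀]
  -- cardinality computation
  rw [Nat.card_eq_of_bijective Φ hbij]
  rw [Finite.card_option]
  have hT : Nat.card {t : Fq f // ∃ β : Fq f, β^2 + β = t} = Nat.card (asMap f).range := by
    apply Nat.card_congr
    apply Equiv.subtypeEquivRight
    intro t
    simp only [AddMonoidHom.mem_range, asMap_apply]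
  rw [hT]
  have h2 := card_range_asMap (f := f) hf
  have h2f : 2 ≤ 2^f := by
    calc 2 = 2^1 := by norm_num
    _ ≤ 2^f := Nat.pow_le_pow_right (by norm_num) hf
  omega

end AuxDev
namespace AuxDev
variable {f m : ℕ}

lemma sumQ (u w : V f m) :
    (∑ i, (u + w).1 i * (u + w).2 i)
      = (∑ i, u.1 i * u.2 i) + (∑ i, w.1 i * w.2 i) + B u w := by
  simp only [B, Prod.fst_add, Prod.snd_add, Pi.add_apply, ← Finset.sum_add_distrib]
  exact Finset.sum_congr rfl fun i _ => by ring

lemma hp_plus : ∀ u w : V f m, Qplus (u + w) = Qplus u + Qplus w + B u w := by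
  intro u w
  simp only [Qplus]
  exact sumQ u w

lemma hs_plus : ∀ (μ : Fq f) (v : V f m), Qplus (μ • v) = μ^2 * Qplus v := by
  intro μ v
  simp only [Qplus, Prod.smul_fst, Prod.smul_snd, Pi.smul_apply, smul_eq_mul, Finset.mul_sum]
  exact Finset.sum_congr rfl fun i _ => by ring

lemma single_mul_single_sum (j : Fin m) (a b : Fq f) :
    ∑ i, (Pi.single j a : Fin m → Fq f) i * (Pi.single j b : Fin m → Fq f) i = a * b := by
  rw [Finset.sum_eq_single j]
  · simp
  · intro i _ hij
    rw [Pi.single_apply, if_neg hij, zero_mul]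
  · intro h
    exact absurd (Finset.mem_univ j) h

lemma hwit_plus (hm : 2 ≤ m) : ∀ t : Fq f, ∃ v : V f m, v ≠ 0 ∧ Qplus v = t := by
  intro t
  have h1 : (1 : ℕ) < m := by omega
  refine ⟨(Pi.single ⟨1, h1⟩ 1, Pi.single ⟨1, h1⟩ t), ?_, ?_⟩
  · intro h
    have := congrArg (fun v : V f m => v.1 ⟨1, h1⟩) h
    simp at this
  · simp only [Qplus]
    rw [single_mul_single_sum, one_mul]

lemma hp_minus (hm0 : 0 < m) (a : Fq f) :
    ∀ u w : V f m, Qminus hm0 a (u + w) = Qminus hm0 a u + Qminus hm0 a w + B u w := by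
  intro u w
  have hsum := sumQ u w
  simp only [Prod.fst_add, Prod.snd_add, Pi.add_apply] at hsum
  simp only [Qminus, Prod.fst_add, Prod.snd_add, Pi.add_apply]
  rw [hsum, Fsq_add, Fsq_add]
  ring

lemma hs_minus (hm0 : 0 < m) (a : Fq f) :
    ∀ (μ : Fq f) (v : V f m), Qminus hm0 a (μ • v) = μ^2 * Qminus hm0 a v := by
  intro μ v
  simp only [Qminus, Prod.smul_fst, Prod.smul_snd, Pi.smul_apply, smul_eq_mul]
  have : (∑ i, (μ * v.1 i) * (μ * v.2 i)) = μ^2 * ∑ i, v.1 i * v.2 i := by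
    rw [Finset.mul_sum]
    exact Finset.sum_congr rfl fun i _ => by ring
  rw [this]
  ring

lemma hwit_minus (hm : 2 ≤ m) (hm0 : 0 < m) (a : Fq f) :
    ∀ t : Fq f, ∃ v : V f m, v ≠ 0 ∧ Qminus hm0 a v = t := by
  intro t
  have h1 : (1 : ℕ) < m := by omega
  refine ⟨(Pi.single ⟨1, h1⟩ 1, Pi.single ⟨1, h1⟩ t), ?_, ?_⟩
  · intro h
    have := congrArg (fun v : V f m => v.1 ⟨1, h1⟩) h
    simp at this
  · simp only [Qminus]
    rw [single_mul_single_sum, one_mul]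
    have e0 : (⟨0, hm0⟩ : Fin m) ≠ ⟨1, h1⟩ := by
      simp [Fin.ext_iff]
    rw [Pi.single_apply, if_neg e0, Pi.single_apply, if_neg e0]
    ring

end AuxDev
end AuxDev
/-- For `m ≥ 2` and `q = 2^f`, each orthogonal subgroup `O^ε` of `G = Sp_{2m}(2^f)` has
exactly `q/2 + 1` orbits on the corresponding coset space `Ω^ε = G/O^ε`; equivalently
`⟨π^ε, π^ε⟩ = q/2 + 1` for the permutation character `π^ε`. -/
theorem orthogonal_orbits_on_own_cosets (f m : ℕ) (hf : 1 ≤ f) (hm : 2 ≤ m) (a : Fq f)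
    (ha : ∀ α : Fq f, α ^ 2 + α ≠ a) :
    Nat.card (Quotient (MulAction.orbitRel (Oplus f m) (Sp f m ⧸ Oplus f m))) =
      2 ^ f / 2 + 1 ∧
    Nat.card (Quotient (MulAction.orbitRel (Ominus f m (by omega) a)
        (Sp f m ⧸ Ominus f m (by omega) a))) = 2 ^ f / 2 + 1 := by
  constructor
  · exact AuxDev.main_count hf hm Qplus AuxDev.hp_plus AuxDev.hs_plus (AuxDev.hwit_plus hm)
  · exact AuxDev.main_count hf hm (Qminus (by omega) a)
      (AuxDev.hp_minus _ a) (AuxDev.hs_minus _ a) (AuxDev.hwit_minus hm _ a)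
end
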